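/- arXiv:2408.11543 — 2 statements merged into one kernel-verified Lean document; each statement's English description precedes it below -/
import Mathlib

section
/- Let G be a finitely generated infinite group. Then the following are equivalent: (i) G admits a virtual homomorphism; (ii) there exists a Banach metric d on G and a metric functional h in the metric-functional boundary ∂(G,d) whose orbit {x.h : x ∈ G} under the G-action is finite. -/
open Filter Topology

section Defs

variable {G : Type*}

/-- `d` is a metric on `X` (nonnegative, vanishing exactly on the diagonal,
symmetric, triangle inequality). -/
def IsMetric {X : Type*} (d : X → X → ℝ) : Prop :=
  (∀ x y, 0 ≤ d x y) ∧ (∀ x y, d x y = 0 ↔ x = y) ∧ (∀ x y, d x y = d y x) ∧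
    (∀ x y z, d x z ≤ d x y + d y z)

/-- The Busemann function of `x` with base point `1`: `b_x(y) = d(x,y) - d(x,1)`. -/
def bus [Group G] (d : G → G → ℝ) (x y : G) : ℝ := d x y - d x 1

/-- `h` belongs to the metric-functional boundary `∂(G,d)`: it is a pointwise
limit of Busemann functions and is not itself a Busemann function. -/
def InBoundary [Group G] (d : G → G → ℝ) (h : G → ℝ) : Prop :=
  (∃ u : ℕ → G, ∀ y : G, Tendsto (fun n => bus d (u n) y) atTop (𝓝 (h y))) ∧
    ∀ x : G, h ≠ bus d x

/-- The action of `x ∈ G` on functions: `(x.h)(y) = h(x⁻¹y) - h(x⁻¹)`. -/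
def act [Group G] (x : G) (h : G → ℝ) : G → ℝ := fun y => h (x⁻¹ * y) - h x⁻¹

/-- `S` is a finite symmetric generating set of `G`. -/
def FinSymGen [Group G] (S : Set G) : Prop :=
  S.Finite ∧ (∀ s ∈ S, s⁻¹ ∈ S) ∧ Subgroup.closure S = ⊤

/-- The word length of `x` with respect to `S`: the least `n` such that `x`
is a product of `n` elements of `S`. -/
noncomputable def wordLength [Group G] (S : Set G) (x : G) : ℕ :=
  sInf {n : ℕ | ∃ l : List G, (∀ s ∈ l, s ∈ S) ∧ l.length = n ∧ l.prod = x}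

/-- The word metric with respect to `S` : `d_S(x,y) = |x⁻¹y|_S`. -/
noncomputable def wordDist [Group G] (S : Set G) (x y : G) : ℝ :=
  (wordLength S (x⁻¹ * y) : ℝ)

/-- `(G,d)` is quasi-isometric to a Cayley graph of `G`. -/
def QIToCayley [Group G] (d : G → G → ℝ) : Prop :=
  ∃ S : Set G, FinSymGen S ∧ ∃ φ : G → G, ∃ C : ℝ, 0 < C ∧
    (∀ y : G, ∃ x : G, wordDist S (φ x) y ≤ C) ∧
    ∀ x y : G, C⁻¹ * d x y - C ≤ wordDist S (φ x) (φ y) ∧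
      wordDist S (φ x) (φ y) ≤ C * d x y + C

/-- A Banach metric on `G`: an integer-valued, left-invariant, proper metric,
quasi-isometric to a Cayley graph, all of whose metric functionals are unbounded. -/
def IsBanachMetric [Group G] (d : G → G → ℝ) : Prop :=
  IsMetric d ∧
  (∀ x y : G, ∃ n : ℕ, d x y = n) ∧
  (∀ x y z : G, d (z * x) (z * y) = d x y) ∧
  (∀ r : ℝ, {x : G | d x 1 ≤ r}.Finite) ∧
  QIToCayley d ∧
  ∀ h : G → ℝ, InBoundary d h → ¬ ∃ B : ℝ, ∀ x : G, |h x| ≤ B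

/-- A virtual homomorphism on `G`: a function `φ : G → ℤ` restricting to a
nontrivial homomorphism on some finite index subgroup. -/
def IsVirtualHom [Group G] (φ : G → ℤ) : Prop :=
  ∃ H : Subgroup G, H.FiniteIndex ∧
    (∀ a b : G, a ∈ H → b ∈ H → φ (a * b) = φ a + φ b) ∧
    ∃ a ∈ H, φ a ≠ 0

end Defs


section Helpers
variable {G : Type*} [Group G]

lemma limit_int {f : ℕ → ℝ} {c : ℝ} (hf : ∀ n, ∃ m : ℤ, f n = (m:ℝ))
    (h : Tendsto f atTop (𝓝 c)) : ∃ m : ℤ, c = (m:ℝ) := by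
  have hcl : IsClosed (Set.range ((↑) : ℤ → ℝ)) := Int.isClosedEmbedding_coe_real.isClosed_range
  have : c ∈ Set.range ((↑) : ℤ → ℝ) := by
    refine hcl.mem_of_tendsto h ?_
    filter_upwards with n
    obtain ⟨m, hm⟩ := hf n
    exact ⟨m, hm.symm⟩
  obtain ⟨m, hm⟩ := this
  exact ⟨m, hm.symm⟩

lemma freq_const {α : Type*} [Finite α] (g : ℕ → α) {p : ℕ → Prop}
    (hp : ∃ᶠ n in atTop, p n) : ∃ a, ∃ᶠ n in atTop, p n ∧ g n = a := by
  by_contra hc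
  push_neg at hc
  have h2 : ∀ a : α, ∀ᶠ n in atTop, ¬ (p n ∧ g n = a) := by
    intro a
    have := hc a
    exact this.mono fun n hn h => hn h.1 h.2
  have h3 : ∀ᶠ n in atTop, ∀ a : α, ¬ (p n ∧ g n = a) := eventually_all.mpr h2
  obtain ⟨n, hpn, hall⟩ := (hp.and_eventually h3).exists
  exact hall (g n) ⟨hpn, rfl⟩

lemma act_mul (x y : G) (k : G → ℝ) : act (x * y) k = act x (act y k) := by
  funext w
  simp only [act, mul_inv_rev]
  have : y⁻¹ * x⁻¹ * w = y⁻¹ * (x⁻¹ * w) := by group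
  rw [this]
  ring

lemma backward (d : G → G → ℝ) (hd : IsBanachMetric d) (h : G → ℝ)
    (hb : InBoundary d h) (hfin : (Set.range fun x : G => act x h).Finite) :
    ∃ φ : G → ℤ, IsVirtualHom φ := by
  obtain ⟨⟨u, hu⟩, hnb⟩ := hb
  -- h 1 = 0
  have h1 : h 1 = 0 := by
    have : Tendsto (fun n => bus d (u n) 1) atTop (𝓝 0) := by
      simp only [bus, sub_self]; exact tendsto_const_nhds
    exact tendsto_nhds_unique (hu 1) this
  have act_one : act 1 h = h := by funext y; simp [act, h1]
  -- stabilizer subgroup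
  have hstabmul : ∀ x y : G, act x h = h → act y h = h → act (x*y) h = h := by
    intro x y hx hy; rw [act_mul, hy, hx]
  have hstabinv : ∀ x : G, act x h = h → act x⁻¹ h = h := by
    intro x hx
    have : act x⁻¹ (act x h) = h := by rw [← act_mul, inv_mul_cancel, act_one]
    rwa [hx] at this
  set H : Subgroup G :=
    { carrier := {x | act x h = h}
      mul_mem' := fun hx hy => hstabmul _ _ hx hy
      one_mem' := act_one
      inv_mem' := fun hx => hstabinv _ hx } with hHdef
  have memH : ∀ x : G, x ∈ H ↔ act x h = h := fun x => Iff.rfl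
  -- finite index
  have hfq : Finite (G ⧸ H) := by
    have : Finite (Set.range fun x : G => act x h) := hfin.to_subtype
    refine Finite.of_injective (fun q => (⟨act q.out h, ⟨q.out, rfl⟩⟩ :
      (Set.range fun x : G => act x h))) ?_
    intro q₁ q₂ hq
    have heq : act q₁.out h = act q₂.out h := congrArg Subtype.val hq
    have : (q₁.out)⁻¹ * q₂.out ∈ H := by
      rw [memH]
      have : act ((q₁.out)⁻¹ * q₂.out) h = act (q₁.out)⁻¹ (act q₂.out h) := act_mul _ _ _
      rw [this, ← heq, ← act_mul, inv_mul_cancel, act_one]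
    calc q₁ = QuotientGroup.mk q₁.out := (QuotientGroup.out_eq' q₁).symm
      _ = QuotientGroup.mk q₂.out := QuotientGroup.eq.mpr this
      _ = q₂ := QuotientGroup.out_eq' q₂
  have hFI : H.FiniteIndex := @Subgroup.finiteIndex_of_finite_quotient _ _ H hfq
  -- integer values
  have hint : ∀ y : G, ∃ m : ℤ, h y = (m:ℝ) := by
    intro y
    refine limit_int (f := fun n => bus d (u n) y) ?_ (hu y)
    intro n
    obtain ⟨k₁, hk₁⟩ := hd.2.1 (u n) y
    obtain ⟨k₂, hk₂⟩ := hd.2.1 (u n) 1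
    exact ⟨(k₁:ℤ) - k₂, by simp only [bus, hk₁, hk₂]; push_cast; ring⟩
  -- additivity on H
  have hadd : ∀ a ∈ H, ∀ y : G, h (a * y) = h a + h y := by
    intro a ha y
    have hai : a⁻¹ ∈ H := H.inv_mem ha
    have := congrFun ((memH a⁻¹).mp hai) y
    simp only [act, inv_inv] at this
    linarith
  -- unboundedness
  have hub : ¬ ∃ B : ℝ, ∀ x : G, |h x| ≤ B := hd.2.2.2.2.2 h ⟨⟨u, hu⟩, hnb⟩
  -- the virtual hom
  refine ⟨fun g => ⌊h g⌋, H, hFI, ?_, ?_⟩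
  · intro a b ha hb
    obtain ⟨ma, hma⟩ := hint a
    obtain ⟨mb, hmb⟩ := hint b
    have : h (a*b) = ((ma + mb : ℤ) : ℝ) := by
      rw [hadd a ha b, hma, hmb]; push_cast; ring
    show ⌊h (a*b)⌋ = ⌊h a⌋ + ⌊h b⌋
    rw [this, hma, hmb, Int.floor_intCast, Int.floor_intCast, Int.floor_intCast]
  · by_contra hc
    push_neg at hc
    have hzero : ∀ a ∈ H, h a = 0 := by
      intro a ha
      obtain ⟨m, hm⟩ := hint a
      have := hc a ha
      rw [hm, Int.floor_intCast] at this
      rw [hm, this]; norm_num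
    have : Fintype (G ⧸ H) := Fintype.ofFinite _
    refine hub ⟨∑ q : G ⧸ H, |h (q.out)⁻¹|, ?_⟩
    intro g
    set r : G := (QuotientGroup.mk (g⁻¹ : G) : G ⧸ H).out with hr
    have hmem : g * r ∈ H := by
      have : (QuotientGroup.mk (g⁻¹ : G) : G ⧸ H) = QuotientGroup.mk r :=
        (QuotientGroup.out_eq' _).symm
      have := QuotientGroup.eq.mp this
      simpa using this
    have hg : h g = h r⁻¹ := by
      have : h ((g * r) * r⁻¹) = h (g*r) + h r⁻¹ := hadd _ hmem _
      simp only [mul_assoc, mul_inv_cancel, mul_one] at this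
      rw [this, hzero _ hmem]; ring
    rw [hg]
    exact Finset.single_le_sum (f := fun q : G ⧸ H => |h (q.out)⁻¹|)
      (fun q _ => abs_nonneg _) (Finset.mem_univ _)

end Helpers
section Word
variable {G : Type*} [Group G]

lemma word_exists {S : Set G} (hsym : ∀ s ∈ S, s⁻¹ ∈ S) (hgen : Subgroup.closure S = ⊤)
    (g : G) : ∃ l : List G, (∀ s ∈ l, s ∈ S) ∧ l.prod = g := by
  set P : Subgroup G :=
    { carrier := {g : G | ∃ l : List G, (∀ s ∈ l, s ∈ S) ∧ l.prod = g}
      one_mem' := ⟨[], by simp, by simp⟩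
      mul_mem' := by
        rintro a b ⟨la, hla, hpa⟩ ⟨lb, hlb, hpb⟩
        exact ⟨la ++ lb, by
          intro s hs
          rcases List.mem_append.mp hs with h | h
          exacts [hla s h, hlb s h], by rw [List.prod_append, hpa, hpb]⟩
      inv_mem' := by
        rintro a ⟨l, hl, hp⟩
        refine ⟨(l.map fun x => x⁻¹).reverse, ?_, ?_⟩
        · intro s hs
          rw [List.mem_reverse, List.mem_map] at hs
          obtain ⟨t, ht, rfl⟩ := hs
          exact hsym t (hl t ht)
        · rw [← List.prod_inv_reverse, hp] } with hP
  have : g ∈ P := by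
    have hle : Subgroup.closure S ≤ P := by
      rw [Subgroup.closure_le]
      intro s hs
      exact ⟨[s], by simpa using hs, by simp⟩
    exact hle (by rw [hgen]; trivial)
  exact this

lemma wordLength_spec {S : Set G} (hsym : ∀ s ∈ S, s⁻¹ ∈ S) (hgen : Subgroup.closure S = ⊤)
    (g : G) : ∃ l : List G, (∀ s ∈ l, s ∈ S) ∧ l.length = wordLength S g ∧ l.prod = g := by
  obtain ⟨l, hl, hp⟩ := word_exists hsym hgen g
  have hne : {n : ℕ | ∃ l : List G, (∀ s ∈ l, s ∈ S) ∧ l.length = n ∧ l.prod = g}.Nonempty :=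
    ⟨l.length, l, hl, rfl, hp⟩
  exact Nat.sInf_mem hne

lemma wordLength_le {S : Set G} {g : G} {l : List G} (hl : ∀ s ∈ l, s ∈ S) (hp : l.prod = g) :
    wordLength S g ≤ l.length :=
  Nat.sInf_le ⟨l, hl, rfl, hp⟩

lemma wordLength_one {S : Set G} : wordLength S (1 : G) = 0 :=
  Nat.le_zero.mp (wordLength_le (l := []) (by simp) (by simp))

lemma wordLength_mul {S : Set G} (hsym : ∀ s ∈ S, s⁻¹ ∈ S) (hgen : Subgroup.closure S = ⊤)
    (g h : G) : wordLength S (g * h) ≤ wordLength S g + wordLength S h := by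
  obtain ⟨lg, hlg, hleng, hpg⟩ := wordLength_spec hsym hgen g
  obtain ⟨lh, hlh, hlenh, hph⟩ := wordLength_spec hsym hgen h
  have := wordLength_le (S := S) (g := g * h) (l := lg ++ lh)
    (by intro s hs; rcases List.mem_append.mp hs with h' | h'; exacts [hlg s h', hlh s h'])
    (by rw [List.prod_append, hpg, hph])
  simpa [hleng, hlenh] using this

lemma wordLength_inv {S : Set G} (hsym : ∀ s ∈ S, s⁻¹ ∈ S) (hgen : Subgroup.closure S = ⊤)
    (g : G) : wordLength S g⁻¹ = wordLength S g := by
  have key : ∀ x : G, wordLength S x⁻¹ ≤ wordLength S x := by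
    intro x
    obtain ⟨l, hl, hlen, hp⟩ := wordLength_spec hsym hgen x
    have := wordLength_le (S := S) (g := x⁻¹) (l := (l.map fun y => y⁻¹).reverse)
      (by
        intro s hs
        rw [List.mem_reverse, List.mem_map] at hs
        obtain ⟨t, ht, rfl⟩ := hs
        exact hsym t (hl t ht))
      (by rw [← List.prod_inv_reverse, hp])
    simpa [hlen] using this
  have h2 := key g⁻¹
  rw [inv_inv] at h2
  exact le_antisymm (key g) h2

lemma wordLength_eq_zero {S : Set G} (hsym : ∀ s ∈ S, s⁻¹ ∈ S) (hgen : Subgroup.closure S = ⊤)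
    {g : G} (h : wordLength S g = 0) : g = 1 := by
  obtain ⟨l, _, hlen, hp⟩ := wordLength_spec hsym hgen g
  rw [h, List.length_eq_zero_iff] at hlen
  rw [hlen] at hp
  simpa using hp.symm

lemma wordLength_pow {S : Set G} (hsym : ∀ s ∈ S, s⁻¹ ∈ S) (hgen : Subgroup.closure S = ⊤)
    (g : G) (n : ℕ) : wordLength S (g ^ n) ≤ n * wordLength S g := by
  induction n with
  | zero => simp [wordLength_one]
  | succ k ih =>
      have : wordLength S (g ^ k * g) ≤ wordLength S (g^k) + wordLength S g :=
        wordLength_mul hsym hgen _ _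
      rw [← pow_succ] at this
      calc wordLength S (g ^ (k+1)) ≤ wordLength S (g^k) + wordLength S g := this
        _ ≤ k * wordLength S g + wordLength S g := by omega
        _ = (k+1) * wordLength S g := by ring

lemma wordBall_finite {S : Set G} (hfin : S.Finite) (hsym : ∀ s ∈ S, s⁻¹ ∈ S)
    (hgen : Subgroup.closure S = ⊤) (n : ℕ) : {g : G | wordLength S g ≤ n}.Finite := by
  induction n with
  | zero =>
      refine Set.Finite.subset (Set.finite_singleton 1) ?_
      intro g hg
      simp only [Set.mem_setOf_eq, Nat.le_zero] at hg
      simp [wordLength_eq_zero hsym hgen hg]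
  | succ k ih =>
      refine Set.Finite.subset (Set.Finite.union ih
        (Set.Finite.biUnion hfin (fun s _ => ih.image (fun g => s * g)))) ?_
      intro g hg
      simp only [Set.mem_setOf_eq] at hg
      rcases Nat.lt_or_ge (wordLength S g) (k+1) with hlt | hge
      · exact Or.inl (by simpa using Nat.lt_succ_iff.mp hlt)
      · have heq : wordLength S g = k + 1 := le_antisymm hg hge
        obtain ⟨l, hl, hlen, hp⟩ := wordLength_spec hsym hgen g
        rw [heq] at hlen
        match l, hlen with
        | s :: l', hlen =>
          have hs : s ∈ S := hl s (by simp)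
          have hl' : ∀ t ∈ l', t ∈ S := fun t ht => hl t (by simp [ht])
          have hwl' : wordLength S l'.prod ≤ k := by
            have := wordLength_le (S := S) hl' rfl
            simp at hlen
            omega
          refine Or.inr ?_
          refine Set.mem_biUnion hs ⟨l'.prod, hwl', ?_⟩
          rw [← hp]
          simp
end Word
namespace VH
variable {G : Type*} [Group G]

noncomputable def coc (H₀ : Subgroup G) (g : G) (ω : G ⧸ H₀) : G :=
  (g • ω).out⁻¹ * g * ω.out

noncomputable def vv (H₀ : Subgroup G) (φ : G → ℤ) (g : G) (ω : G ⧸ H₀) : ℤ :=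
  φ (coc H₀ g ω)

variable (H₀ : Subgroup G) (φ : G → ℤ)

lemma coc_mem (g : G) (ω : G ⧸ H₀) : coc H₀ g ω ∈ H₀ := by
  have e1 : (QuotientGroup.mk (g • ω).out : G ⧸ H₀) = g • ω := QuotientGroup.out_eq' _
  have e2 : g • ω = g • (QuotientGroup.mk ω.out : G ⧸ H₀) := by rw [QuotientGroup.out_eq']
  have e3 : g • (QuotientGroup.mk ω.out : G ⧸ H₀) = QuotientGroup.mk (g * ω.out) :=
    MulAction.Quotient.smul_mk H₀ g ω.out
  have h1 : (QuotientGroup.mk (g • ω).out : G ⧸ H₀) = QuotientGroup.mk (g * ω.out) :=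
    e1.trans (e2.trans e3)
  have := QuotientGroup.eq.mp h1
  simpa [coc, mul_assoc] using this

lemma coc_cocycle (g h : G) (ω : G ⧸ H₀) :
    coc H₀ (g * h) ω = coc H₀ g (h • ω) * coc H₀ h ω := by
  simp only [coc, mul_smul]
  group

variable (hadd : ∀ a b : G, a ∈ H₀ → b ∈ H₀ → φ (a * b) = φ a + φ b)
include hadd

lemma phi_one : φ 1 = 0 := by
  have := hadd 1 1 H₀.one_mem H₀.one_mem
  simpa using this

lemma vv_mul (g h : G) (ω : G ⧸ H₀) :
    vv H₀ φ (g * h) ω = vv H₀ φ g (h • ω) + vv H₀ φ h ω := by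
  rw [vv, coc_cocycle]
  exact hadd _ _ (coc_mem H₀ g (h • ω)) (coc_mem H₀ h ω)

lemma vv_one (ω : G ⧸ H₀) : vv H₀ φ 1 ω = 0 := by
  have h1 : coc H₀ (1 : G) ω = 1 := by
    simp only [coc, one_smul]
    group
  rw [vv, h1, phi_one H₀ φ hadd]

lemma vv_inv (g : G) (ω : G ⧸ H₀) : vv H₀ φ g⁻¹ ω = - vv H₀ φ g (g⁻¹ • ω) := by
  have := vv_mul H₀ φ hadd g g⁻¹ ω
  rw [mul_inv_cancel, vv_one H₀ φ hadd] at this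
  linarith

variable [Fintype (G ⧸ H₀)]

noncomputable def lam (g : G) : ℤ := ∑ ω : G ⧸ H₀, |vv H₀ φ g ω|

omit hadd in
lemma lam_nonneg (g : G) : 0 ≤ lam H₀ φ g :=
  Finset.sum_nonneg fun ω _ => abs_nonneg _

omit hadd in
lemma abs_vv_le_lam (g : G) (ω : G ⧸ H₀) : |vv H₀ φ g ω| ≤ lam H₀ φ g :=
  Finset.single_le_sum (f := fun ω => |vv H₀ φ g ω|) (fun _ _ => abs_nonneg _)
    (Finset.mem_univ ω)

omit hadd in
lemma sum_smul_reindex (f : G ⧸ H₀ → ℤ) (h : G) :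
    ∑ ω : G ⧸ H₀, f (h • ω) = ∑ ω : G ⧸ H₀, f ω :=
  Equiv.sum_comp (MulAction.toPerm h : Equiv.Perm (G ⧸ H₀)) f

lemma lam_one : lam H₀ φ 1 = 0 := by
  simp [lam, vv_one H₀ φ hadd]

lemma lam_mul (g h : G) : lam H₀ φ (g * h) ≤ lam H₀ φ g + lam H₀ φ h := by
  have h1 : ∀ ω : G ⧸ H₀, |vv H₀ φ (g*h) ω| ≤ |vv H₀ φ g (h • ω)| + |vv H₀ φ h ω| := by
    intro ω
    rw [vv_mul H₀ φ hadd]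
    exact abs_add_le _ _
  calc lam H₀ φ (g*h) ≤ ∑ ω : G ⧸ H₀, (|vv H₀ φ g (h • ω)| + |vv H₀ φ h ω|) :=
        Finset.sum_le_sum fun ω _ => h1 ω
    _ = (∑ ω : G ⧸ H₀, |vv H₀ φ g (h • ω)|) + lam H₀ φ h := by rw [Finset.sum_add_distrib]; rfl
    _ = lam H₀ φ g + lam H₀ φ h := by
        rw [sum_smul_reindex H₀ (fun ω => |vv H₀ φ g ω|) h]; rfl

lemma lam_inv (g : G) : lam H₀ φ g⁻¹ = lam H₀ φ g := by
  have h1 : ∀ ω : G ⧸ H₀, |vv H₀ φ g⁻¹ ω| = |vv H₀ φ g (g⁻¹ • ω)| := by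
    intro ω
    rw [vv_inv H₀ φ hadd, abs_neg]
  calc lam H₀ φ g⁻¹ = ∑ ω : G ⧸ H₀, |vv H₀ φ g (g⁻¹ • ω)| := Finset.sum_congr rfl fun ω _ => h1 ω
    _ = lam H₀ φ g := sum_smul_reindex H₀ (fun ω => |vv H₀ φ g ω|) g⁻¹

lemma lam_list (l : List G) (Λ : ℤ) (hΛ : ∀ s ∈ l, lam H₀ φ s ≤ Λ) :
    lam H₀ φ l.prod ≤ l.length * Λ := by
  induction l with
  | nil => simp [lam_one H₀ φ hadd]
  | cons s l' ih =>
      have h1 : lam H₀ φ (s * l'.prod) ≤ lam H₀ φ s + lam H₀ φ l'.prod := lam_mul H₀ φ hadd _ _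
      have h2 := ih (fun t ht => hΛ t (by simp [ht]))
      have h3 := hΛ s (by simp)
      simp only [List.prod_cons, List.length_cons]
      push_cast
      linarith

end VH
namespace VH
variable {G : Type*} [Group G] (H₀ : Subgroup G) (φ : G → ℤ)

variable [Fintype (G ⧸ H₀)]

noncomputable def KK : Subgroup G := (MulAction.toPermHom G (G ⧸ H₀)).ker

lemma memKK {g : G} : g ∈ KK H₀ ↔ ∀ ω : G ⧸ H₀, g • ω = ω := by
  rw [KK, MonoidHom.mem_ker]
  constructor
  · intro hg ω
    have := Equiv.ext_iff.mp hg ω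
    simpa [MulAction.toPermHom] using this
  · intro hg
    ext ω
    simpa [MulAction.toPermHom] using hg ω

lemma KK_finiteIndex : (KK H₀).FiniteIndex := Subgroup.finiteIndex_ker _

lemma KK_normal : (KK H₀).Normal := MonoidHom.normal_ker _

lemma exists_pow_mem (K : Subgroup G) (hFI : K.FiniteIndex) (x : G) :
    ∃ m : ℕ, 0 < m ∧ x ^ m ∈ K := by
  haveI := hFI
  haveI : Finite (G ⧸ K) := Subgroup.finite_quotient_of_finiteIndex
  obtain ⟨i, j, hne, heq⟩ := Finite.exists_ne_map_eq_of_infinite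
    (fun n : ℕ => (QuotientGroup.mk (x ^ n) : G ⧸ K))
  have key : ∀ i j : ℕ, i < j → (QuotientGroup.mk (x ^ i) : G ⧸ K) = QuotientGroup.mk (x ^ j) →
      ∃ m : ℕ, 0 < m ∧ x ^ m ∈ K := by
    intro i j hij he
    refine ⟨j - i, by omega, ?_⟩
    have h2 := QuotientGroup.eq.mp he
    have hx : (x ^ i)⁻¹ * x ^ j = x ^ (j - i) := by
      have h3 : x ^ i * x ^ (j - i) = x ^ j := by
        rw [← pow_add]; congr 1; omega
      rw [← h3]; group
    rwa [hx] at h2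
  rcases Nat.lt_or_ge i j with hij | hij
  · exact key i j hij heq
  · exact key j i (by omega) heq.symm

variable (hadd : ∀ a b : G, a ∈ H₀ → b ∈ H₀ → φ (a * b) = φ a + φ b)
include hadd

lemma vv_pow_K {z : G} (hz : z ∈ KK H₀) (m : ℕ) (ω : G ⧸ H₀) :
    vv H₀ φ (z ^ m) ω = m * vv H₀ φ z ω := by
  induction m with
  | zero => simp [vv_one H₀ φ hadd]
  | succ k ih =>
      have h1 : vv H₀ φ (z ^ k * z) ω = vv H₀ φ (z^k) (z • ω) + vv H₀ φ z ω :=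
        vv_mul H₀ φ hadd _ _ _
      rw [← pow_succ] at h1
      rw [h1, (memKK H₀).mp hz ω, ih]
      push_cast; ring

lemma lam_pow_K {z : G} (hz : z ∈ KK H₀) (m : ℕ) :
    lam H₀ φ (z ^ m) = m * lam H₀ φ z := by
  simp only [lam, vv_pow_K H₀ φ hadd hz, abs_mul]
  rw [← Finset.mul_sum]
  congr 1
  simp

lemma phi_pow {a : G} (ha : a ∈ H₀) (m : ℕ) : φ (a ^ m) = m * φ a := by
  induction m with
  | zero => simpa using phi_one H₀ φ hadd
  | succ k ih =>
      rw [pow_succ, hadd _ _ (pow_mem ha k) ha, ih]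
      push_cast; ring

lemma exists_z {a₀ : G} (ha₀ : a₀ ∈ H₀) (hne : φ a₀ ≠ 0) :
    ∃ z : G, z ∈ KK H₀ ∧ ∀ ω : G ⧸ H₀, vv H₀ φ z ω ≠ 0 := by
  -- for each ω, an element of K with nonzero vv at ω
  have hwit : ∀ ω : G ⧸ H₀, ∃ w : G, w ∈ KK H₀ ∧ vv H₀ φ w ω ≠ 0 := by
    intro ω
    obtain ⟨m, hm, hmem⟩ := exists_pow_mem (KK H₀) (KK_finiteIndex H₀) a₀
    refine ⟨ω.out * a₀ ^ m * ω.out⁻¹, ?_, ?_⟩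
    · have : (KK H₀).Normal := KK_normal H₀
      simpa [mul_assoc] using this.conj_mem _ hmem ω.out
    · have hWK : ω.out * a₀ ^ m * ω.out⁻¹ ∈ KK H₀ := by
        have : (KK H₀).Normal := KK_normal H₀
        simpa [mul_assoc] using this.conj_mem _ hmem ω.out
      have hsmul : (ω.out * a₀ ^ m * ω.out⁻¹) • ω = ω := (memKK H₀).mp hWK ω
      have hcoc : coc H₀ (ω.out * a₀ ^ m * ω.out⁻¹) ω = a₀ ^ m := by
        rw [coc, hsmul]
        group
      rw [vv, hcoc, phi_pow H₀ φ hadd ha₀ m]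
      have : (m : ℤ) ≠ 0 := by exact_mod_cast Nat.pos_iff_ne_zero.mp hm
      exact mul_ne_zero this hne
  -- induction over finite sets of coordinates
  have main : ∀ F : Finset (G ⧸ H₀), ∃ z : G, z ∈ KK H₀ ∧ ∀ ω ∈ F, vv H₀ φ z ω ≠ 0 := by
    intro F
    haveI : DecidableEq (G ⧸ H₀) := Classical.decEq _
    induction F using Finset.induction with
    | empty => exact ⟨1, (KK H₀).one_mem, by simp⟩
    | @insert ω₀ F hω₀ ih =>
        obtain ⟨z, hzK, hz⟩ := ih
        obtain ⟨w, hwK, hw⟩ := hwit ω₀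
        set M : ℕ := (lam H₀ φ w + 1).toNat with hM
        have hMpos : (M : ℤ) = lam H₀ φ w + 1 := by
          rw [hM, Int.toNat_of_nonneg (by have := lam_nonneg H₀ φ w; omega)]
        have hMgt : ∀ ω : G ⧸ H₀, |vv H₀ φ w ω| < (M:ℤ) := by
          intro ω
          have := abs_vv_le_lam H₀ φ w ω
          omega
        refine ⟨z ^ M * w, (KK H₀).mul_mem (pow_mem hzK M) hwK, ?_⟩
        intro ω hω
        have hval : vv H₀ φ (z ^ M * w) ω = (M:ℤ) * vv H₀ φ z ω + vv H₀ φ w ω := by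
          rw [vv_mul H₀ φ hadd, (memKK H₀).mp hwK ω, vv_pow_K H₀ φ hadd hzK]
        rw [hval]
        rcases Finset.mem_insert.mp hω with rfl | hωF
        · rcases eq_or_ne (vv H₀ φ z ω) 0 with hz0 | hz0
          · rw [hz0]; simpa using hw
          · have h1 : (M:ℤ) ≤ |(M:ℤ) * vv H₀ φ z ω| := by
              have habs : (1:ℤ) ≤ |vv H₀ φ z ω| := abs_pos.mpr hz0
              have hM0 : (0:ℤ) ≤ (M:ℤ) := by positivity
              calc (M:ℤ) = (M:ℤ) * 1 := (mul_one _).symm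
                _ ≤ (M:ℤ) * |vv H₀ φ z ω| := mul_le_mul_of_nonneg_left habs hM0
                _ = |(M:ℤ) * vv H₀ φ z ω| := by rw [abs_mul, abs_of_nonneg hM0]
            have h2 := hMgt ω
            intro hcontra
            have : (M:ℤ) * vv H₀ φ z ω = - vv H₀ φ w ω := by linarith
            rw [this, abs_neg] at h1
            omega
        · have hz0 := hz ω hωF
          have h1 : (M:ℤ) ≤ |(M:ℤ) * vv H₀ φ z ω| := by
            have habs : (1:ℤ) ≤ |vv H₀ φ z ω| := abs_pos.mpr hz0
            have hM0 : (0:ℤ) ≤ (M:ℤ) := by positivity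
            calc (M:ℤ) = (M:ℤ) * 1 := (mul_one _).symm
              _ ≤ (M:ℤ) * |vv H₀ φ z ω| := mul_le_mul_of_nonneg_left habs hM0
              _ = |(M:ℤ) * vv H₀ φ z ω| := by rw [abs_mul, abs_of_nonneg hM0]
          have h2 := hMgt ω
          intro hcontra
          have : (M:ℤ) * vv H₀ φ z ω = - vv H₀ φ w ω := by linarith
          rw [this, abs_neg] at h1
          omega
  obtain ⟨z, hzK, hz⟩ := main Finset.univ
  exact ⟨z, hzK, fun ω => hz ω (Finset.mem_univ ω)⟩

end VH
namespace VH
variable {G : Type*} [Group G]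

noncomputable def ell (S : Set G) (H₀ : Subgroup G) (φ : G → ℤ) [Fintype (G ⧸ H₀)]
    (R : ℤ) (g : G) : ℤ :=
  max (wordLength S g : ℤ) (R * lam H₀ φ g)

noncomputable def dd (S : Set G) (H₀ : Subgroup G) (φ : G → ℤ) [Fintype (G ⧸ H₀)]
    (R : ℤ) (x y : G) : ℝ :=
  ((ell S H₀ φ R (x⁻¹ * y) : ℤ) : ℝ)

variable (S : Set G) (H₀ : Subgroup G) (φ : G → ℤ) [Fintype (G ⧸ H₀)] (R : ℤ)

lemma ell_ge_wl (g : G) : (wordLength S g : ℤ) ≤ ell S H₀ φ R g := le_max_left _ _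

lemma ell_ge_lam (g : G) : R * lam H₀ φ g ≤ ell S H₀ φ R g := le_max_right _ _

lemma ell_nonneg (g : G) : 0 ≤ ell S H₀ φ R g :=
  le_trans (by positivity) (ell_ge_wl S H₀ φ R g)

variable (hsym : ∀ s ∈ S, s⁻¹ ∈ S) (hgen : Subgroup.closure S = ⊤)
  (hadd : ∀ a b : G, a ∈ H₀ → b ∈ H₀ → φ (a * b) = φ a + φ b)

include hadd in
lemma ell_one : ell S H₀ φ R 1 = 0 := by
  simp [ell, wordLength_one, lam_one H₀ φ hadd]

include hsym hgen in
lemma ell_eq_zero {g : G} (h : ell S H₀ φ R g ≤ 0) : g = 1 := by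
  have h1 := ell_ge_wl S H₀ φ R g
  have h2 : wordLength S g = 0 := by omega
  exact wordLength_eq_zero hsym hgen h2

include hsym hgen hadd in
lemma ell_inv (g : G) : ell S H₀ φ R g⁻¹ = ell S H₀ φ R g := by
  simp [ell, wordLength_inv hsym hgen, lam_inv H₀ φ hadd]

include hsym hgen hadd in
lemma ell_mul (hR : 0 ≤ R) (g h : G) :
    ell S H₀ φ R (g * h) ≤ ell S H₀ φ R g + ell S H₀ φ R h := by
  rw [ell, max_le_iff]
  constructor
  · have := wordLength_mul hsym hgen g h
    have h1 := ell_ge_wl S H₀ φ R g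
    have h2 := ell_ge_wl S H₀ φ R h
    push_cast at *
    omega
  · have := lam_mul H₀ φ hadd g h
    have h1 := ell_ge_lam S H₀ φ R g
    have h2 := ell_ge_lam S H₀ φ R h
    nlinarith

-- the finite bound for lam on S
noncomputable def LamS (hfin : S.Finite) : ℤ := (∑ s ∈ hfin.toFinset, lam H₀ φ s) + 1

lemma LamS_pos (hfin : S.Finite) : 1 ≤ LamS S H₀ φ hfin := by
  have : 0 ≤ ∑ s ∈ hfin.toFinset, lam H₀ φ s :=
    Finset.sum_nonneg fun s _ => lam_nonneg H₀ φ s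
  rw [LamS]; omega

lemma lam_le_LamS (hfin : S.Finite) {s : G} (hs : s ∈ S) : lam H₀ φ s ≤ LamS S H₀ φ hfin := by
  have h1 : lam H₀ φ s ≤ ∑ t ∈ hfin.toFinset, lam H₀ φ t :=
    Finset.single_le_sum (f := fun t => lam H₀ φ t) (fun t _ => lam_nonneg H₀ φ t)
      (hfin.mem_toFinset.mpr hs)
  rw [LamS]; omega

include hsym hgen hadd in
lemma lam_le_wl (hfin : S.Finite) (g : G) :
    lam H₀ φ g ≤ LamS S H₀ φ hfin * wordLength S g := by
  obtain ⟨l, hl, hlen, hp⟩ := wordLength_spec hsym hgen g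
  have := lam_list H₀ φ hadd l (LamS S H₀ φ hfin) (fun s hs => lam_le_LamS S H₀ φ hfin (hl s hs))
  rw [hp, hlen] at this
  linarith

include hsym hgen hadd in
lemma ell_le_wl (hfin : S.Finite) (hR : 1 ≤ R) (g : G) :
    ell S H₀ φ R g ≤ (R * LamS S H₀ φ hfin) * (wordLength S g : ℤ) := by
  have hL := LamS_pos S H₀ φ hfin
  have h1 := lam_le_wl S H₀ φ hsym hgen hadd hfin g
  have hwlnn : (0:ℤ) ≤ (wordLength S g : ℤ) := by positivity
  rw [ell, max_le_iff]
  constructor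
  · have hRL : 1 ≤ R * LamS S H₀ φ hfin := by nlinarith
    nlinarith
  · nlinarith [lam_nonneg H₀ φ g]

end VH
namespace VH
variable {G : Type*} [Group G]

lemma key_abs (a b s : ℤ) (hs : s * a = |a|) (h1 : 1 ≤ |a|) (hb : |b| ≤ |a|) :
    |a + b| = |a| + s * b := by
  have ha : a ≠ 0 := by
    intro h; rw [h] at h1; simp at h1
  rcases lt_trichotomy a 0 with hneg | hzero | hpos
  · have habs : |a| = -a := abs_of_neg hneg
    have hs1 : s = -1 := by
      have : s * a = (-1) * a := by rw [hs, habs]; ring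
      exact mul_right_cancel₀ ha this
    have hb' := abs_le.mp hb
    have : a + b ≤ 0 := by
      have : b ≤ |a| := hb'.2
      rw [habs] at this; linarith
    rw [abs_of_nonpos this, hs1, habs]; ring
  · exact absurd hzero ha
  · have habs : |a| = a := abs_of_pos hpos
    have hs1 : s = 1 := by
      have : s * a = 1 * a := by rw [hs, habs]; ring
      exact mul_right_cancel₀ ha this
    have hb' := abs_le.mp hb
    have : 0 ≤ a + b := by
      have : -|a| ≤ b := hb'.1
      rw [habs] at this; linarith
    rw [abs_of_nonneg this, hs1, habs]; ring

lemma sum_abs_ineq1 (a b : ℤ) : 2 * |a| ≤ |a + b| + |a - b| := by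
  calc 2 * |a| = |(a+b) + (a-b)| := by rw [show (a+b)+(a-b) = 2*a by ring, abs_mul]; simp
    _ ≤ |a+b| + |a-b| := abs_add_le _ _

lemma sum_abs_ineq2 (a b : ℤ) : 2 * |b| ≤ |a + b| + |a - b| := by
  calc 2 * |b| = |(a+b) - (a-b)| := by rw [show (a+b)-(a-b) = 2*b by ring, abs_mul]; simp
    _ ≤ |a+b| + |a-b| := abs_sub _ _

variable (S : Set G) (H₀ : Subgroup G) (φ : G → ℤ) [Fintype (G ⧸ H₀)] (R : ℤ)

lemma vv_inv_K (hadd : ∀ a b : G, a ∈ H₀ → b ∈ H₀ → φ (a * b) = φ a + φ b)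
    {x : G} (hx : x ∈ KK H₀) (ω : G ⧸ H₀) : vv H₀ φ x⁻¹ ω = - vv H₀ φ x ω := by
  rw [vv_inv H₀ φ hadd, (memKK H₀).mp ((KK H₀).inv_mem hx)]

lemma bus_dd (x y : G) :
    bus (dd S H₀ φ R) x y = ((ell S H₀ φ R (x⁻¹ * y) - ell S H₀ φ R x⁻¹ : ℤ) : ℝ) := by
  rw [bus, dd, dd, mul_one]
  push_cast; ring

set_option maxHeartbeats 1000000 in
theorem banach_unbounded (hfin : S.Finite) (hsym : ∀ s ∈ S, s⁻¹ ∈ S)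
    (hgen : Subgroup.closure S = ⊤)
    (hadd : ∀ a b : G, a ∈ H₀ → b ∈ H₀ → φ (a * b) = φ a + φ b)
    {z : G} (hzK : z ∈ KK H₀) (hvz : ∀ ω : G ⧸ H₀, vv H₀ φ z ω ≠ 0)
    (hR : 1 ≤ R) :
    ∀ h : G → ℝ, InBoundary (dd S H₀ φ R) h → ¬ ∃ B : ℝ, ∀ x : G, |h x| ≤ B := by
  classical
  intro h hInB
  rintro ⟨B, hB⟩
  obtain ⟨⟨u, hu⟩, hnb⟩ := hInB
  set E : G → ℤ := ell S H₀ φ R with hE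
  set lm : G → ℤ := lam H₀ φ with hlm
  set v : ℕ → G := fun n => (u n)⁻¹ with hv
  have hbusf : ∀ n y, bus (dd S H₀ φ R) (u n) y = ((E (v n * y) - E (v n) : ℤ) : ℝ) := by
    intro n y
    rw [bus_dd]
  have htend : ∀ y : G, Tendsto (fun n => ((E (v n * y) - E (v n) : ℤ) : ℝ)) atTop (𝓝 (h y)) := by
    intro y
    have := hu y
    apply this.congr
    intro n
    exact hbusf n y
  have hB0 : 0 ≤ B := le_trans (abs_nonneg _) (hB 1)
  set Bz : ℤ := ⌈B⌉ + 1 with hBzdef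
  have hBz1 : 1 ≤ Bz := by
    have : (0:ℤ) ≤ ⌈B⌉ := by exact_mod_cast Int.ceil_nonneg hB0
    omega
  have hBBz : B + 1 ≤ (Bz : ℝ) := by
    rw [hBzdef]
    push_cast
    linarith [Int.le_ceil B]
  -- eventual upper and lower bounds on Busemann increments
  have hupper : ∀ y : G, ∀ᶠ n in atTop, E (v n * y) - E (v n) ≤ Bz := by
    intro y
    have h1 : ∀ᶠ n in atTop, ((E (v n * y) - E (v n) : ℤ) : ℝ) < h y + 1 :=
      (htend y).eventually_lt_const (by linarith)
    filter_upwards [h1] with n hn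
    have h2 : h y + 1 ≤ B + 1 := by have := (abs_le.mp (hB y)).2; linarith
    have h3 : ((E (v n * y) - E (v n) : ℤ) : ℝ) < (Bz : ℝ) := by linarith
    exact_mod_cast h3.le
  have hlower : ∀ y : G, ∀ᶠ n in atTop, -Bz ≤ E (v n * y) - E (v n) := by
    intro y
    have h1 : ∀ᶠ n in atTop, h y - 1 < ((E (v n * y) - E (v n) : ℤ) : ℝ) :=
      (htend y).eventually_const_lt (by linarith)
    filter_upwards [h1] with n hn
    have h2 : -(B + 1) ≤ h y - 1 := by have := (abs_le.mp (hB y)).1; linarith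
    have h3 : (-Bz : ℝ) ≤ ((E (v n * y) - E (v n) : ℤ) : ℝ) := by push_cast; push_cast at hn; linarith
    exact_mod_cast h3
  -- escape to infinity
  have hesc : ∀ x : G, ∀ᶠ n in atTop, v n ≠ x := by
    intro x
    by_contra hc
    rw [Filter.not_eventually] at hc
    have hfreq : ∃ᶠ n in atTop, bus (dd S H₀ φ R) (u n) = bus (dd S H₀ φ R) x⁻¹ := by
      refine hc.mono ?_
      intro n hn
      push_neg at hn
      have : u n = x⁻¹ := by
        have := congrArg Inv.inv hn
        simpa [hv] using this
      rw [this]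
    refine hnb x⁻¹ (funext fun y => ?_)
    refine tendsto_nhds_unique_of_frequently_eq (hu y) tendsto_const_nhds ?_
    exact hfreq.mono fun n hn => by rw [hn]
  have hescape : ∀ r : ℤ, ∀ᶠ n in atTop, r < E (v n) := by
    intro r
    have hball : {g : G | E g ≤ r}.Finite := by
      refine (wordBall_finite hfin hsym hgen r.toNat).subset ?_
      intro g hg
      simp only [Set.mem_setOf_eq] at hg ⊢
      have h1 := ell_ge_wl S H₀ φ R g
      rw [← hE] at h1
      have h2 : (wordLength S g : ℤ) ≤ r := le_trans h1 hg
      have := Int.toNat_le_toNat h2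
      simpa using this
    have hall : ∀ᶠ n in atTop, ∀ g ∈ {g : G | E g ≤ r}, v n ≠ g :=
      (Set.Finite.eventually_all hball).mpr fun g _ => hesc g
    filter_upwards [hall] with n hn
    by_contra hcon
    push_neg at hcon
    exact hn (v n) hcon rfl
  -- constants
  set Λ : ℤ := LamS S H₀ φ hfin with hΛdef
  have hΛ1 : 1 ≤ Λ := LamS_pos S H₀ φ hfin
  set Lc : ℤ := Bz + 1 with hLcdef
  have hLc2 : 2 ≤ Lc := by omega
  set C₁ : ℤ := (R * Λ + 2) * Lc with hC₁def
  have hRΛ : 1 ≤ R * Λ := by nlinarith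
  have hC₁ : 3 * Lc ≤ C₁ := by nlinarith
  have hC₁0 : 0 < C₁ := by nlinarith
  set C₂ : ℤ := Bz + C₁ with hC₂def
  have hC₂0 : 0 < C₂ := by omega
  set ρ : ℤ := R * Λ * Lc with hρdef
  -- the margin predicate
  set Mn : ℕ → Prop := fun n => R * lm (v n) + C₁ ≤ (wordLength S (v n) : ℤ) with hMndef
  by_cases hA : ∃ᶠ n in atTop, Mn n
  · -- CASE A : word part has margin infinitely often
    have hsplit : ∀ n, Mn n → ∃ y : G, E y ≤ ρ ∧ E (v n * y) - E (v n) ≤ -Lc := by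
      intro n hMn
      have hlm0 : 0 ≤ lm (v n) := lam_nonneg H₀ φ (v n)
      have hwlv : C₁ ≤ (wordLength S (v n) : ℤ) := by
        have : 0 ≤ R * lm (v n) := by nlinarith
        simp only [hMndef] at hMn
        omega
      obtain ⟨l, hl, hlen, hp⟩ := wordLength_spec hsym hgen (v n)
      set Lnat : ℕ := Lc.toNat with hLnat
      have hLnatc : (Lnat : ℤ) = Lc := Int.toNat_of_nonneg (by omega)
      have hLk : Lnat ≤ l.length := by
        have h9 : (Lnat : ℤ) ≤ (l.length : ℤ) := by rw [hLnatc, hlen]; omega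
        exact_mod_cast h9
      set tk : List G := l.take (l.length - Lnat) with htk
      set dr : List G := l.drop (l.length - Lnat) with hdr
      have htkmem : ∀ s ∈ tk, s ∈ S := fun s hs => hl s (List.mem_of_mem_take hs)
      have hdrmem : ∀ s ∈ dr, s ∈ S := fun s hs => hl s (List.mem_of_mem_drop hs)
      have htklen : tk.length = l.length - Lnat := by
        rw [htk, List.length_take]; omega
      have hdrlen : dr.length = Lnat := by
        rw [hdr, List.length_drop]; omega
      have hprod : tk.prod * dr.prod = v n := by
        rw [htk, hdr, List.prod_take_mul_prod_drop, hp]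
      set y : G := (dr.prod)⁻¹ with hy
      have hvy : v n * y = tk.prod := by
        rw [hy, ← hprod]; group
      -- bounds on y
      have hwly : (wordLength S y : ℤ) ≤ Lc := by
        have h1 : wordLength S dr.prod ≤ Lnat := by
          have := wordLength_le (S := S) hdrmem rfl
          omega
        have h2 : wordLength S y = wordLength S dr.prod := by
          rw [hy, wordLength_inv hsym hgen]
        rw [h2, ← hLnatc]
        exact_mod_cast h1
      have hlamy : lm y ≤ Λ * Lc := by
        have h1 : lm dr.prod ≤ (dr.length : ℤ) * Λ :=
          lam_list H₀ φ hadd dr Λ (fun s hs => lam_le_LamS S H₀ φ hfin (hdrmem s hs))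
        have h2 : lm y = lm dr.prod := by rw [hy, hlm, lam_inv H₀ φ hadd]
        rw [h2]
        calc lm dr.prod ≤ (dr.length : ℤ) * Λ := h1
          _ = Lc * Λ := by rw [hdrlen, hLnatc]
          _ = Λ * Lc := by ring
      have hEy : E y ≤ ρ := by
        rw [hE, ell, max_le_iff]
        constructor
        · calc (wordLength S y : ℤ) ≤ Lc := hwly
            _ ≤ R * Λ * Lc := by nlinarith
        · calc R * lam H₀ φ y = R * lm y := by rw [hlm]
            _ ≤ R * (Λ * Lc) := by nlinarith
            _ = R * Λ * Lc := by ring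
      -- bound on v n * y
      have hwtk : (wordLength S tk.prod : ℤ) ≤ (wordLength S (v n) : ℤ) - Lc := by
        have h1 : wordLength S tk.prod ≤ l.length - Lnat := by
          have := wordLength_le (S := S) htkmem rfl
          omega
        have h2 : ((l.length - Lnat : ℕ) : ℤ) = (l.length : ℤ) - Lc := by
          rw [← hLnatc]; omega
        calc (wordLength S tk.prod : ℤ) ≤ ((l.length - Lnat : ℕ) : ℤ) := by exact_mod_cast h1
          _ = (l.length:ℤ) - Lc := h2
          _ = (wordLength S (v n) : ℤ) - Lc := by rw [hlen]
      have hlamtk : lm tk.prod ≤ lm (v n) + Λ * Lc := by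
        have h1 : lm (v n * y) ≤ lm (v n) + lm y := lam_mul H₀ φ hadd _ _
        rw [hvy] at h1
        linarith
      have hEtk : E (v n * y) ≤ (wordLength S (v n) : ℤ) - Lc := by
        rw [hvy, hE, ell, max_le_iff]
        constructor
        · exact hwtk
        · have : R * lam H₀ φ tk.prod ≤ R * (lm (v n) + Λ * Lc) := by
            have := hlamtk
            rw [hlm] at this ⊢
            nlinarith [lam_nonneg H₀ φ tk.prod]
          calc R * lam H₀ φ tk.prod ≤ R * lm (v n) + R * Λ * Lc := by
                rw [hlm] at this; linarith
            _ ≤ ((wordLength S (v n) : ℤ) - C₁) + R * Λ * Lc := by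
                simp only [hMndef] at hMn; linarith
            _ = (wordLength S (v n) : ℤ) - 2 * Lc := by rw [hC₁def]; ring
            _ ≤ (wordLength S (v n) : ℤ) - Lc := by omega
      have hEv : (wordLength S (v n) : ℤ) ≤ E (v n) := ell_ge_wl S H₀ φ R (v n)
      exact ⟨y, hEy, by omega⟩
    -- pigeonhole over the finite ball
    have hball : {y : G | E y ≤ ρ}.Finite := by
      refine (wordBall_finite hfin hsym hgen ρ.toNat).subset ?_
      intro g hg
      simp only [Set.mem_setOf_eq] at hg ⊢
      have h1 := ell_ge_wl S H₀ φ R g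
      rw [← hE] at h1
      have h2 : (wordLength S g : ℤ) ≤ ρ := le_trans h1 hg
      have := Int.toNat_le_toNat h2
      simpa using this
    have hy0 : ∃ y₀, ∃ᶠ n in atTop, E (v n * y₀) - E (v n) ≤ -Lc := by
      by_contra hno
      push_neg at hno
      have hev : ∀ᶠ n in atTop, ∀ y ∈ {y : G | E y ≤ ρ}, ¬ (E (v n * y) - E (v n) ≤ -Lc) := by
        refine (Set.Finite.eventually_all hball).mpr ?_
        intro y _
        have := hno y
        simp only [not_le]
        exact this
      obtain ⟨n, hMn, hall⟩ := (hA.and_eventually hev).exists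
      obtain ⟨y, hy1, hy2⟩ := hsplit n hMn
      exact hall y hy1 hy2
    obtain ⟨y₀, hy₀⟩ := hy0
    obtain ⟨n, hfr, hlow⟩ := (hy₀.and_eventually (hlower y₀)).exists
    omega
  · -- CASE B : eventually the lam part dominates
    have hBev : ∀ᶠ n in atTop, ¬ Mn n := by rwa [Filter.not_frequently] at hA
    have hellub : ∀ᶠ n in atTop, E (v n) ≤ R * lm (v n) + C₁ := by
      filter_upwards [hBev] with n hn
      simp only [hMndef, not_le] at hn
      rw [hE, ell, max_le_iff, ← hlm]
      constructor
      · linarith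
      · linarith
    have htest : ∀ y : G, ∀ᶠ n in atTop, lm (v n * y) - lm (v n) ≤ C₂ := by
      intro y
      filter_upwards [hupper y, hellub] with n h1 h2
      have h3 : R * lm (v n * y) ≤ E (v n * y) := by
        rw [hE, hlm]; exact ell_ge_lam S H₀ φ R _
      have h4 : R * (lm (v n * y) - lm (v n)) ≤ C₂ := by
        rw [hC₂def]; linarith
      rcases le_or_gt 0 (lm (v n * y) - lm (v n)) with hX | hX
      · nlinarith
      · omega
    -- CASE B main analysis
    have hlamV : ∀ n : ℕ, lm (v n) = ∑ ω : G ⧸ H₀, |vv H₀ φ (v n) ω| := by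
      intro n; rw [hlm, lam]
    have hlamK : ∀ (n : ℕ) (w : G), w ∈ KK H₀ →
        lm (v n * w) = ∑ ω : G ⧸ H₀, |vv H₀ φ (v n) ω + vv H₀ φ w ω| := by
      intro n w hw
      rw [hlm, lam]
      refine Finset.sum_congr rfl fun ω _ => ?_
      rw [vv_mul H₀ φ hadd, (memKK H₀).mp hw ω]
    -- coordinates blow up along the sequence
    have hcoords : ∀ m : ℤ, ∀ᶠ n in atTop, ∀ ω : G ⧸ H₀, m ≤ |vv H₀ φ (v n) ω| + C₂ := by
      intro m
      rcases le_or_gt m 0 with hm | hm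
      · filter_upwards with n
        intro ω
        have := abs_nonneg (vv H₀ φ (v n) ω)
        omega
      · set mt : ℕ := m.toNat with hmtdef
        have hmtc : (mt : ℤ) = m := Int.toNat_of_nonneg hm.le
        have hz1 : z ^ mt ∈ KK H₀ := pow_mem hzK mt
        have hz2 : (z ^ mt)⁻¹ ∈ KK H₀ := (KK H₀).inv_mem hz1
        filter_upwards [htest (z ^ mt), htest ((z ^ mt)⁻¹)] with n h1 h2
        intro ω
        have e1 : lm (v n * z ^ mt)
            = ∑ ω : G ⧸ H₀, |vv H₀ φ (v n) ω + (mt:ℤ) * vv H₀ φ z ω| := by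
          rw [hlamK n _ hz1]
          exact Finset.sum_congr rfl fun ω _ => by rw [vv_pow_K H₀ φ hadd hzK]
        have e2 : lm (v n * (z ^ mt)⁻¹)
            = ∑ ω : G ⧸ H₀, |vv H₀ φ (v n) ω - (mt:ℤ) * vv H₀ φ z ω| := by
          rw [hlamK n _ hz2]
          refine Finset.sum_congr rfl fun ω _ => ?_
          rw [vv_inv_K H₀ φ hadd hz1, vv_pow_K H₀ φ hadd hzK]
          congr 1
          try ring
        have hterm : ∀ ω' : G ⧸ H₀, (0:ℤ) ≤ |vv H₀ φ (v n) ω' + (mt:ℤ) * vv H₀ φ z ω'|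
            + |vv H₀ φ (v n) ω' - (mt:ℤ) * vv H₀ φ z ω'| - 2 * |vv H₀ φ (v n) ω'| := by
          intro ω'
          have := sum_abs_ineq1 (vv H₀ φ (v n) ω') ((mt:ℤ) * vv H₀ φ z ω')
          omega
        have q1 : ∑ ω' : G ⧸ H₀, |vv H₀ φ (v n) ω' + (mt:ℤ) * vv H₀ φ z ω'|
            ≤ (∑ ω' : G ⧸ H₀, |vv H₀ φ (v n) ω'|) + C₂ := by
          rw [← e1, ← hlamV]
          linarith [h1]
        have q2 : ∑ ω' : G ⧸ H₀, |vv H₀ φ (v n) ω' - (mt:ℤ) * vv H₀ φ z ω'|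
            ≤ (∑ ω' : G ⧸ H₀, |vv H₀ φ (v n) ω'|) + C₂ := by
          rw [← e2, ← hlamV]
          linarith [h2]
        have q3 : |vv H₀ φ (v n) ω + (mt:ℤ) * vv H₀ φ z ω|
            + |vv H₀ φ (v n) ω - (mt:ℤ) * vv H₀ φ z ω| - 2 * |vv H₀ φ (v n) ω|
            ≤ ∑ ω' : G ⧸ H₀, (|vv H₀ φ (v n) ω' + (mt:ℤ) * vv H₀ φ z ω'|
              + |vv H₀ φ (v n) ω' - (mt:ℤ) * vv H₀ φ z ω'| - 2 * |vv H₀ φ (v n) ω'|) :=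
          Finset.single_le_sum (f := fun ω' => |vv H₀ φ (v n) ω' + (mt:ℤ) * vv H₀ φ z ω'|
              + |vv H₀ φ (v n) ω' - (mt:ℤ) * vv H₀ φ z ω'| - 2 * |vv H₀ φ (v n) ω'|)
            (fun ω' _ => hterm ω') (Finset.mem_univ ω)
        have q4 : ∑ ω' : G ⧸ H₀, (|vv H₀ φ (v n) ω' + (mt:ℤ) * vv H₀ φ z ω'|
              + |vv H₀ φ (v n) ω' - (mt:ℤ) * vv H₀ φ z ω'| - 2 * |vv H₀ φ (v n) ω'|)
            ≤ 2 * C₂ := by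
          rw [Finset.sum_sub_distrib, Finset.sum_add_distrib, ← Finset.mul_sum]
          linarith [q1, q2]
        have q5 : 2 * ((mt:ℤ) * |vv H₀ φ z ω|) ≤ |vv H₀ φ (v n) ω + (mt:ℤ) * vv H₀ φ z ω|
            + |vv H₀ φ (v n) ω - (mt:ℤ) * vv H₀ φ z ω| := by
          have := sum_abs_ineq2 (vv H₀ φ (v n) ω) ((mt:ℤ) * vv H₀ φ z ω)
          rwa [abs_mul, abs_of_nonneg (by positivity : (0:ℤ) ≤ (mt:ℤ))] at this
        have q6 : 1 ≤ |vv H₀ φ z ω| := abs_pos.mpr (hvz ω)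
        nlinarith [q3, q4, q5, q6]
    -- frequent sign pattern
    have hfreqP : ∃ P : (G ⧸ H₀) → Bool, ∃ᶠ n in atTop,
        (fun ω => decide (0 < vv H₀ φ (v n) ω)) = P := by
      obtain ⟨P, hP⟩ := freq_const (fun n => (fun ω : G ⧸ H₀ => decide (0 < vv H₀ φ (v n) ω)))
        (p := fun _ => True) (Filter.Frequently.of_forall fun _ => trivial)
      exact ⟨P, hP.mono fun n hn => hn.2⟩
    obtain ⟨P, hPfreq⟩ := hfreqP
    set sg : (G ⧸ H₀) → ℤ := fun ω => if P ω then 1 else -1 with hsgdef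
    have hsign : ∀ n : ℕ, ((fun ω : G ⧸ H₀ => decide (0 < vv H₀ φ (v n) ω)) = P) →
        ∀ ω : G ⧸ H₀, 1 ≤ |vv H₀ φ (v n) ω| →
          sg ω * vv H₀ φ (v n) ω = |vv H₀ φ (v n) ω| := by
      intro n hn ω hω
      have hPω : P ω = decide (0 < vv H₀ φ (v n) ω) := by rw [← hn]
      by_cases hpos : 0 < vv H₀ φ (v n) ω
      · have hPt : P ω = true := by rw [hPω]; simp [hpos]
        have : sg ω = 1 := by rw [hsgdef]; simp [hPt]
        rw [this, one_mul, abs_of_pos hpos]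
      · have hne0 : vv H₀ φ (v n) ω ≠ 0 := by
          intro hc; rw [hc] at hω; simp at hω
        have hneg : vv H₀ φ (v n) ω < 0 := by omega
        have hPt : P ω = false := by rw [hPω]; simp [hpos]
        have : sg ω = -1 := by rw [hsgdef]; simp [hPt]
        rw [this, abs_of_neg hneg]; ring
    set Θ : G → ℤ := fun w => ∑ ω : G ⧸ H₀, sg ω * vv H₀ φ w ω with hΘdef
    by_cases hblind : ∀ w ∈ KK H₀, Θ w = 0
    · -- blind pattern: Θ is bounded on G, contradiction with escape
      set Gs : Subgroup G :=
        { carrier := {x : G | ∀ ω : G ⧸ H₀, P (x • ω) = P ω}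
          one_mem' := fun ω => by rw [one_smul]
          mul_mem' := by
            intro a b ha hb ω
            rw [mul_smul, ha (b • ω), hb ω]
          inv_mem' := by
            intro x hx ω
            have := hx (x⁻¹ • ω)
            rw [smul_inv_smul] at this
            exact this.symm } with hGsdef
      have hmemGs : ∀ x : G, x ∈ Gs ↔ ∀ ω : G ⧸ H₀, P (x • ω) = P ω := fun x => Iff.rfl
      have hKGs : KK H₀ ≤ Gs := by
        intro x hx
        rw [hmemGs]
        intro ω
        rw [(memKK H₀).mp hx ω]
      have hsx : ∀ x ∈ Gs, ∀ ω : G ⧸ H₀, sg (x • ω) = sg ω := by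
        intro x hx ω
        rw [hsgdef]
        simp only
        rw [(hmemGs x).mp hx ω]
      have hΘadd : ∀ (g x : G), x ∈ Gs → Θ (g * x) = Θ g + Θ x := by
        intro g x hx
        rw [hΘdef]
        simp only
        have e1 : ∀ ω : G ⧸ H₀, sg ω * vv H₀ φ (g * x) ω
            = sg ω * vv H₀ φ g (x • ω) + sg ω * vv H₀ φ x ω := by
          intro ω
          rw [vv_mul H₀ φ hadd]
          ring
        rw [Finset.sum_congr rfl (fun ω _ => e1 ω), Finset.sum_add_distrib]
        congr 1
        have e2 : ∀ ω : G ⧸ H₀, sg ω * vv H₀ φ g (x • ω)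
            = sg (x • ω) * vv H₀ φ g (x • ω) := fun ω => by rw [hsx x hx ω]
        rw [Finset.sum_congr rfl (fun ω _ => e2 ω)]
        exact sum_smul_reindex H₀ (fun ω => sg ω * vv H₀ φ g ω) x
      have hΘ1 : Θ 1 = 0 := by
        rw [hΘdef]
        simp only
        rw [Finset.sum_eq_zero]
        intro ω _
        rw [vv_one H₀ φ hadd, mul_zero]
      have hΘpow : ∀ x ∈ Gs, ∀ m : ℕ, Θ (x ^ m) = m * Θ x := by
        intro x hx m
        induction m with
        | zero => simp [hΘ1]
        | succ k ih =>
            rw [pow_succ, hΘadd _ _ hx, ih]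
            push_cast; ring
      have hΘGs : ∀ x ∈ Gs, Θ x = 0 := by
        intro x hx
        obtain ⟨m, hm, hmK⟩ := exists_pow_mem (KK H₀) (KK_finiteIndex H₀) x
        have h1 : Θ (x ^ m) = 0 := hblind _ hmK
        rw [hΘpow x hx m] at h1
        have : (m:ℤ) ≠ 0 := by exact_mod_cast Nat.pos_iff_ne_zero.mp hm
        exact (mul_eq_zero.mp h1).resolve_left this
      haveI hGsFI : Gs.FiniteIndex := by
        haveI := KK_finiteIndex H₀
        exact Subgroup.finiteIndex_of_le hKGs
      haveI : Finite (G ⧸ Gs) := Subgroup.finite_quotient_of_finiteIndex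
      haveI : Fintype (G ⧸ Gs) := Fintype.ofFinite _
      set C₄ : ℤ := ∑ q : G ⧸ Gs, |Θ (Quotient.out q)| with hC₄def
      have hC₄0 : 0 ≤ C₄ := Finset.sum_nonneg fun q _ => abs_nonneg _
      have hΘbdd : ∀ g : G, |Θ g| ≤ C₄ := by
        intro g
        set q : G ⧸ Gs := QuotientGroup.mk g with hq
        have hx : (q.out)⁻¹ * g ∈ Gs := by
          refine QuotientGroup.eq.mp ?_
          rw [hq, QuotientGroup.out_eq']
        have hdecomp : g = q.out * ((q.out)⁻¹ * g) := by group
        have hΘg : Θ g = Θ q.out := by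
          conv_lhs => rw [hdecomp]
          rw [hΘadd _ _ hx, hΘGs _ hx, add_zero]
        rw [hΘg]
        exact Finset.single_le_sum (f := fun q : G ⧸ Gs => |Θ (Quotient.out q)|)
          (fun q _ => abs_nonneg _) (Finset.mem_univ q)
      obtain ⟨n, hPn, hcn⟩ := (hPfreq.and_eventually (hcoords (C₄ + C₂ + 1))).exists
      have hVbig : ∀ ω : G ⧸ H₀, C₄ + 1 ≤ |vv H₀ φ (v n) ω| := by
        intro ω
        have := hcn ω
        omega
      have hsum : Θ (v n) = ∑ ω : G ⧸ H₀, |vv H₀ φ (v n) ω| := by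
        rw [hΘdef]
        exact Finset.sum_congr rfl fun ω _ => hsign n hPn ω (by have := hVbig ω; omega)
      have hone : C₄ + 1 ≤ Θ (v n) := by
        rw [hsum]
        calc C₄ + 1 ≤ |vv H₀ φ (v n) (QuotientGroup.mk (1:G))| := hVbig (QuotientGroup.mk (1:G))
          _ ≤ ∑ ω : G ⧸ H₀, |vv H₀ φ (v n) ω| :=
            Finset.single_le_sum (f := fun ω => |vv H₀ φ (v n) ω|)
              (fun ω _ => abs_nonneg _) (Finset.mem_univ _)
      have h5 : Θ (v n) ≤ C₄ := le_trans (le_abs_self _) (hΘbdd (v n))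
      omega
    · -- non-blind pattern: a test direction with linear gain
      push_neg at hblind
      obtain ⟨w, hwK, hwΘ⟩ := hblind
      have hΘinv : Θ w⁻¹ = - Θ w := by
        rw [hΘdef]
        simp only
        rw [← Finset.sum_neg_distrib]
        refine Finset.sum_congr rfl fun ω _ => ?_
        rw [vv_inv_K H₀ φ hadd hwK]
        ring
      set w' : G := if 0 ≤ Θ w then w else w⁻¹ with hw'def
      have hw'K : w' ∈ KK H₀ := by
        rw [hw'def]; split
        · exact hwK
        · exact (KK H₀).inv_mem hwK
      have hΘw' : 1 ≤ Θ w' := by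
        rw [hw'def]
        split
        · rename_i hcase
          omega
        · rename_i hcase
          rw [hΘinv]
          omega
      set mt : ℕ := (C₂ + 1).toNat with hmtdef
      have hmtc : (mt:ℤ) = C₂ + 1 := Int.toNat_of_nonneg (by omega)
      have hW : w' ^ mt ∈ KK H₀ := pow_mem hw'K mt
      set mstar : ℤ := (mt:ℤ) * lm w' + C₂ + 1 with hmstardef
      obtain ⟨n, hPn, hrest⟩ := (hPfreq.and_eventually
        ((hcoords mstar).and ((hupper (w' ^ mt)).and hellub))).exists
      obtain ⟨hcn, hub2, hel2⟩ := hrest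
      have hVb : ∀ ω : G ⧸ H₀, (mt:ℤ) * |vv H₀ φ w' ω| + 1 ≤ |vv H₀ φ (v n) ω| := by
        intro ω
        have h1 := hcn ω
        have h2 : |vv H₀ φ w' ω| ≤ lm w' := by rw [hlm]; exact abs_vv_le_lam H₀ φ w' ω
        have h3 : (0:ℤ) ≤ (mt:ℤ) := by positivity
        nlinarith
      have hgain : lm (v n * w' ^ mt) - lm (v n) = (mt:ℤ) * Θ w' := by
        have e1 : lm (v n * w' ^ mt)
            = ∑ ω : G ⧸ H₀, |vv H₀ φ (v n) ω + (mt:ℤ) * vv H₀ φ w' ω| := by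
          rw [hlamK n _ hW]
          exact Finset.sum_congr rfl fun ω _ => by rw [vv_pow_K H₀ φ hadd hw'K]
        have e2 : ∀ ω : G ⧸ H₀, |vv H₀ φ (v n) ω + (mt:ℤ) * vv H₀ φ w' ω|
            = |vv H₀ φ (v n) ω| + sg ω * ((mt:ℤ) * vv H₀ φ w' ω) := by
          intro ω
          have hb : |(mt:ℤ) * vv H₀ φ w' ω| ≤ |vv H₀ φ (v n) ω| := by
            rw [abs_mul, abs_of_nonneg (by positivity : (0:ℤ) ≤ (mt:ℤ))]
            have := hVb ω
            omega
          have h1le : 1 ≤ |vv H₀ φ (v n) ω| := by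
            have := hVb ω
            have h3 : (0:ℤ) ≤ (mt:ℤ) * |vv H₀ φ w' ω| := by positivity
            omega
          exact key_abs _ _ _ (hsign n hPn ω h1le) h1le hb
        rw [e1, Finset.sum_congr rfl (fun ω _ => e2 ω), Finset.sum_add_distrib, hlamV n]
        have e3 : ∑ ω : G ⧸ H₀, sg ω * ((mt:ℤ) * vv H₀ φ w' ω)
            = (mt:ℤ) * Θ w' := by
          rw [hΘdef]
          simp only
          rw [Finset.mul_sum]
          exact Finset.sum_congr rfl fun ω _ => by ring
        rw [e3]
        ring
      have h3 : R * lm (v n * w' ^ mt) ≤ E (v n * w' ^ mt) := by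
        rw [hE, hlm]; exact ell_ge_lam S H₀ φ R _
      have h4 : (mt:ℤ) ≤ (mt:ℤ) * Θ w' := by nlinarith [hmtc]
      have h5 : R * ((mt:ℤ) * Θ w') ≤ C₂ := by
        have := hub2
        have h6 : R * (lm (v n * w' ^ mt) - lm (v n)) ≤ Bz + C₁ := by
          have h7 : R * lm (v n) + C₁ ≥ E (v n) := hel2
          linarith
        rw [hgain] at h6
        rw [hC₂def]
        linarith
      have h8 : C₂ + 1 ≤ R * ((mt:ℤ) * Θ w') := by nlinarith [hmtc]
      omega


end VH
namespace VH
variable {G : Type*} [Group G]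

set_option maxHeartbeats 1000000 in
theorem forward_main (S : Set G) (hfin : S.Finite) (hsym : ∀ s ∈ S, s⁻¹ ∈ S)
    (hgen : Subgroup.closure S = ⊤) (H₀ : Subgroup G) [Fintype (G ⧸ H₀)] (φ : G → ℤ)
    (hadd : ∀ a b : G, a ∈ H₀ → b ∈ H₀ → φ (a * b) = φ a + φ b)
    {a₀ : G} (ha₀ : a₀ ∈ H₀) (hne : φ a₀ ≠ 0) :
    ∃ d : G → G → ℝ, IsBanachMetric d ∧
      ∃ h : G → ℝ, InBoundary d h ∧ (Set.range fun x : G => act x h).Finite := by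
  classical
  obtain ⟨z, hzK, hvz⟩ := exists_z H₀ φ hadd ha₀ hne
  haveI : Nonempty (G ⧸ H₀) := ⟨QuotientGroup.mk 1⟩
  set R : ℤ := (wordLength S z : ℤ) + 1 with hRdef
  have hR : 1 ≤ R := by rw [hRdef]; omega
  have hR0 : 0 ≤ R := by omega
  set d : G → G → ℝ := dd S H₀ φ R with hddef
  have hdval : ∀ x y : G, d x y = ((ell S H₀ φ R (x⁻¹ * y) : ℤ) : ℝ) := fun x y => rfl
  have hlamz1 : 1 ≤ lam H₀ φ z := by
    rw [lam]
    calc (1:ℤ) ≤ |vv H₀ φ z (QuotientGroup.mk 1)| := abs_pos.mpr (hvz _)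
      _ ≤ ∑ ω : G ⧸ H₀, |vv H₀ φ z ω| := Finset.single_le_sum
          (f := fun ω => |vv H₀ φ z ω|) (fun ω _ => abs_nonneg _) (Finset.mem_univ _)
  have hellzn : ∀ n : ℕ, ell S H₀ φ R (z ^ n) = R * ((n:ℤ) * lam H₀ φ z) := by
    intro n
    have h1 : (wordLength S (z ^ n) : ℤ) ≤ (n:ℤ) * (wordLength S z : ℤ) := by
      exact_mod_cast wordLength_pow hsym hgen z n
    have h2 : lam H₀ φ (z ^ n) = (n:ℤ) * lam H₀ φ z := lam_pow_K H₀ φ hadd hzK n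
    rw [ell, h2, max_eq_right]
    have hn0 : (0:ℤ) ≤ (n:ℤ) := by positivity
    calc (wordLength S (z ^ n) : ℤ) ≤ (n:ℤ) * (wordLength S z : ℤ) := h1
      _ ≤ R * ((n:ℤ) * lam H₀ φ z) := by rw [hRdef]; nlinarith
  have hmetric : IsMetric d := by
    refine ⟨?_, ?_, ?_, ?_⟩
    · intro x y
      rw [hdval]
      exact_mod_cast ell_nonneg S H₀ φ R _
    · intro x y
      rw [hdval]
      constructor
      · intro hxy
        have h1 : ell S H₀ φ R (x⁻¹ * y) = 0 := by exact_mod_cast hxy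
        have h2 : x⁻¹ * y = 1 := ell_eq_zero S H₀ φ R hsym hgen (le_of_eq h1)
        exact (inv_mul_eq_one.mp h2)
      · rintro rfl
        rw [inv_mul_cancel]
        have := ell_one S H₀ φ R hadd
        exact_mod_cast this
    · intro x y
      rw [hdval, hdval]
      have h1 : y⁻¹ * x = (x⁻¹ * y)⁻¹ := by group
      rw [h1, ell_inv S H₀ φ R hsym hgen hadd]
    · intro x y w
      rw [hdval, hdval, hdval]
      have h1 : x⁻¹ * w = (x⁻¹ * y) * (y⁻¹ * w) := by group
      rw [h1]
      have := ell_mul S H₀ φ R hsym hgen hadd hR0 (x⁻¹ * y) (y⁻¹ * w)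
      exact_mod_cast this
  have hint : ∀ x y : G, ∃ n : ℕ, d x y = n := by
    intro x y
    refine ⟨(ell S H₀ φ R (x⁻¹ * y)).toNat, ?_⟩
    rw [hdval]
    have h0 := ell_nonneg S H₀ φ R (x⁻¹ * y)
    exact_mod_cast (congrArg (fun t : ℤ => (t : ℝ)) (Int.toNat_of_nonneg h0)).symm
  have hleftinv : ∀ x y w : G, d (w * x) (w * y) = d x y := by
    intro x y w
    rw [hdval, hdval]
    congr 2
    group
  have hproper : ∀ r : ℝ, {x : G | d x 1 ≤ r}.Finite := by
    intro r
    refine Set.Finite.subset (((wordBall_finite hfin hsym hgen (⌈r⌉.toNat)).image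
      (fun g => g⁻¹))) ?_
    intro x hx
    simp only [Set.mem_setOf_eq] at hx
    rw [hdval, mul_one] at hx
    have h1 : ell S H₀ φ R x⁻¹ ≤ ⌈r⌉ := by
      have h2 : ((ell S H₀ φ R x⁻¹ : ℤ) : ℝ) ≤ (⌈r⌉ : ℝ) := le_trans hx (Int.le_ceil r)
      exact_mod_cast h2
    have h3 : (wordLength S x⁻¹ : ℤ) ≤ ⌈r⌉ := le_trans (ell_ge_wl S H₀ φ R x⁻¹) h1
    refine ⟨x⁻¹, ?_, inv_inv x⟩
    simp only [Set.mem_setOf_eq]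
    have := Int.toNat_le_toNat h3
    simpa using this
  have hCint : (1:ℤ) ≤ R * LamS S H₀ φ hfin := by
    have := LamS_pos S H₀ φ hfin
    nlinarith
  have hQI : QIToCayley d := by
    refine ⟨S, ⟨hfin, hsym, hgen⟩, id, ((R * LamS S H₀ φ hfin : ℤ) : ℝ), ?_, ?_, ?_⟩
    · have h1 : (1:ℝ) ≤ ((R * LamS S H₀ φ hfin : ℤ) : ℝ) := by exact_mod_cast hCint
      linarith
    · intro y
      refine ⟨y, ?_⟩
      rw [wordDist, id_eq, inv_mul_cancel, wordLength_one]
      have h1 : (1:ℝ) ≤ ((R * LamS S H₀ φ hfin : ℤ) : ℝ) := by exact_mod_cast hCint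
      push_cast at h1 ⊢
      linarith
    · intro x y
      set C : ℝ := ((R * LamS S H₀ φ hfin : ℤ) : ℝ) with hC
      have hC1 : (1:ℝ) ≤ C := by
        rw [hC]
        exact_mod_cast hCint
      have hC0 : (0:ℝ) < C := by linarith
      have hW0 : (0:ℝ) ≤ wordDist S (id x) (id y) := by
        rw [wordDist]; positivity
      have hEW : wordDist S (id x) (id y) ≤ d x y := by
        rw [wordDist, id_eq, id_eq, hdval]
        exact_mod_cast ell_ge_wl S H₀ φ R (x⁻¹ * y)
      have hWE : d x y ≤ C * wordDist S (id x) (id y) := by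
        rw [wordDist, id_eq, id_eq, hdval, hC]
        have := ell_le_wl S H₀ φ R hsym hgen hadd hfin hR (x⁻¹ * y)
        exact_mod_cast this
      have hd0 : (0:ℝ) ≤ d x y := hmetric.1 x y
      constructor
      · have h1 : C⁻¹ * d x y ≤ wordDist S (id x) (id y) := by
          rw [inv_mul_le_iff₀ hC0]
          exact hWE
        linarith
      · calc wordDist S (id x) (id y) ≤ d x y := hEW
          _ ≤ C * d x y + C := by nlinarith
  have hBanach : ∀ h : G → ℝ, InBoundary d h → ¬ ∃ B : ℝ, ∀ x : G, |h x| ≤ B :=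
    banach_unbounded S H₀ φ R hfin hsym hgen hadd hzK hvz hR
  -- the boundary functional
  set eps : (G ⧸ H₀) → ℤ := fun ω => if 0 < vv H₀ φ z ω then 1 else -1 with hepsdef
  have heps : ∀ ω : G ⧸ H₀, eps ω * vv H₀ φ z ω = |vv H₀ φ z ω| := by
    intro ω
    rw [hepsdef]
    by_cases hpos : 0 < vv H₀ φ z ω
    · simp only [hpos, if_true, one_mul]
      exact (abs_of_pos hpos).symm
    · have hneg : vv H₀ φ z ω < 0 := by
        rcases lt_trichotomy (vv H₀ φ z ω) 0 with h | h | h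
        · exact h
        · exact absurd h (hvz ω)
        · exact absurd h hpos
      simp only [hpos, if_false]
      rw [abs_of_neg hneg]; ring
  have habseps : ∀ ω : G ⧸ H₀, |eps ω| = 1 := by
    intro ω
    by_cases hpos : 0 < vv H₀ φ z ω
    · simp [hepsdef, hpos]
    · simp [hepsdef, hpos]
  set hf : G → ℝ := fun y => ((R * ∑ ω : G ⧸ H₀, eps (y • ω) * vv H₀ φ y ω : ℤ) : ℝ) with hfdef
  have hsum_eps_z : ∑ ω : G ⧸ H₀, eps ω * vv H₀ φ z ω = lam H₀ φ z := by
    rw [lam]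
    exact Finset.sum_congr rfl fun ω _ => heps ω
  -- convergence of Busemann functions along z⁻ⁿ
  have hbusconv : ∀ y : G, ∀ᶠ n in atTop,
      ell S H₀ φ R (z ^ n * y) - ell S H₀ φ R (z ^ n)
        = R * ∑ ω : G ⧸ H₀, eps (y • ω) * vv H₀ φ y ω := by
    intro y
    rw [Filter.eventually_atTop]
    refine ⟨(lam H₀ φ y + (wordLength S y : ℤ) + R * lam H₀ φ y + 2).toNat, ?_⟩
    intro n hn
    have hlamy0 : 0 ≤ lam H₀ φ y := lam_nonneg H₀ φ y
    have hRlamy0 : 0 ≤ R * lam H₀ φ y := by positivity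
    have hwly0 : (0:ℤ) ≤ (wordLength S y : ℤ) := by positivity
    have hnZ : lam H₀ φ y + (wordLength S y : ℤ) + R * lam H₀ φ y + 2 ≤ (n:ℤ) := by
      have h9 := Int.toNat_le.mp hn
      exact h9
    have hn1 : (1:ℤ) ≤ (n:ℤ) := by linarith
    have hn0 : (0:ℤ) ≤ (n:ℤ) := by linarith
    have hvvny : ∀ ω : G ⧸ H₀, vv H₀ φ (z ^ n * y) ω
        = (n:ℤ) * vv H₀ φ z (y • ω) + vv H₀ φ y ω := by
      intro ω
      rw [vv_mul H₀ φ hadd, vv_pow_K H₀ φ hadd hzK]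
    have habsval : ∀ ω : G ⧸ H₀, |(n:ℤ) * vv H₀ φ z (y • ω) + vv H₀ φ y ω|
        = (n:ℤ) * |vv H₀ φ z (y • ω)| + eps (y • ω) * vv H₀ φ y ω := by
      intro ω
      have hvz1 : 1 ≤ |vv H₀ φ z (y • ω)| := abs_pos.mpr (hvz (y • ω))
      have ha0 : |(n:ℤ) * vv H₀ φ z (y • ω)| = (n:ℤ) * |vv H₀ φ z (y • ω)| := by
        rw [abs_mul, abs_of_nonneg hn0]
      have ha1 : eps (y • ω) * ((n:ℤ) * vv H₀ φ z (y • ω))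
          = |(n:ℤ) * vv H₀ φ z (y • ω)| := by
        rw [ha0, ← heps (y • ω)]; ring
      have ha2 : 1 ≤ |(n:ℤ) * vv H₀ φ z (y • ω)| := by
        rw [ha0]; nlinarith
      have ha3 : |vv H₀ φ y ω| ≤ |(n:ℤ) * vv H₀ φ z (y • ω)| := by
        rw [ha0]
        have h5 : |vv H₀ φ y ω| ≤ lam H₀ φ y := abs_vv_le_lam H₀ φ y ω
        nlinarith
      rw [key_abs _ _ _ ha1 ha2 ha3, ha0]
    have hlamzy : lam H₀ φ (z ^ n * y)
        = (n:ℤ) * lam H₀ φ z + ∑ ω : G ⧸ H₀, eps (y • ω) * vv H₀ φ y ω := by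
      rw [lam, Finset.sum_congr rfl (fun ω _ => by rw [hvvny ω, habsval ω]),
        Finset.sum_add_distrib, ← Finset.mul_sum]
      congr 1
      rw [sum_smul_reindex H₀ (fun ω => |vv H₀ φ z ω|) y]
      rfl
    have hmu : |∑ ω : G ⧸ H₀, eps (y • ω) * vv H₀ φ y ω| ≤ lam H₀ φ y := by
      calc |∑ ω : G ⧸ H₀, eps (y • ω) * vv H₀ φ y ω|
          ≤ ∑ ω : G ⧸ H₀, |eps (y • ω) * vv H₀ φ y ω| :=
            Finset.abs_sum_le_sum_abs _ _
        _ = ∑ ω : G ⧸ H₀, |vv H₀ φ y ω| := by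
            refine Finset.sum_congr rfl fun ω _ => ?_
            rw [abs_mul, habseps, one_mul]
        _ = lam H₀ φ y := by rw [lam]
    have hEzy : ell S H₀ φ R (z ^ n * y) = R * lam H₀ φ (z ^ n * y) := by
      rw [ell, max_eq_right]
      have hw1 : (wordLength S (z ^ n * y) : ℤ)
          ≤ (n:ℤ) * (wordLength S z : ℤ) + (wordLength S y : ℤ) := by
        have h6 := wordLength_mul hsym hgen (z ^ n) y
        have h7 := wordLength_pow hsym hgen z n
        push_cast
        exact_mod_cast le_trans (by exact_mod_cast h6) (by push_cast; omega)
      have h8 : -(R * lam H₀ φ y) ≤ R * ∑ ω : G ⧸ H₀, eps (y • ω) * vv H₀ φ y ω := by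
        have h9 : -(lam H₀ φ y) ≤ ∑ ω : G ⧸ H₀, eps (y • ω) * vv H₀ φ y ω := by
          have := neg_abs_le (∑ ω : G ⧸ H₀, eps (y • ω) * vv H₀ φ y ω)
          linarith [hmu]
        nlinarith
      have h10 : (n:ℤ) * (wordLength S z : ℤ) + (n:ℤ) ≤ R * ((n:ℤ) * lam H₀ φ z) := by
        rw [hRdef]; nlinarith
      rw [hlamzy]
      have h11 : R * ((n:ℤ) * lam H₀ φ z + ∑ ω : G ⧸ H₀, eps (y • ω) * vv H₀ φ y ω)
          = R * ((n:ℤ) * lam H₀ φ z) + R * ∑ ω : G ⧸ H₀, eps (y • ω) * vv H₀ φ y ω := by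
        ring
      rw [h11]
      linarith
    rw [hEzy, hellzn n, hlamzy]
    ring
  have hInB : InBoundary d hf := by
    constructor
    · refine ⟨fun n => (z ^ n)⁻¹, fun y => ?_⟩
      have hev : (fun n => bus d ((z ^ n)⁻¹) y) =ᶠ[atTop] (fun _ => hf y) := by
        filter_upwards [hbusconv y] with n hn
        have e1 : bus d ((z ^ n)⁻¹) y
            = ((ell S H₀ φ R (z ^ n * y) - ell S H₀ φ R (z ^ n) : ℤ) : ℝ) := by
          rw [bus, hdval, hdval, inv_inv, mul_one]
          push_cast
          ring
        rw [e1, hn, hfdef]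
      exact tendsto_const_nhds.congr' hev.symm
    · intro x hcontra
      set m : ℕ := (ell S H₀ φ R x⁻¹ + 1).toNat with hmdef
      have hell0 := ell_nonneg S H₀ φ R x⁻¹
      have hmc : (m:ℤ) = ell S H₀ φ R x⁻¹ + 1 := Int.toNat_of_nonneg (by omega)
      have hzmK : z ^ m ∈ KK H₀ := pow_mem hzK m
      have hzmiK : (z ^ m)⁻¹ ∈ KK H₀ := (KK H₀).inv_mem hzmK
      have h3 : ∀ ω : G ⧸ H₀, eps ((z ^ m)⁻¹ • ω) * vv H₀ φ ((z ^ m)⁻¹) ω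
          = -((m:ℤ) * (eps ω * vv H₀ φ z ω)) := by
        intro ω
        rw [(memKK H₀).mp hzmiK ω, vv_inv_K H₀ φ hadd hzmK, vv_pow_K H₀ φ hadd hzK]
        ring
      have h2 : ∑ ω : G ⧸ H₀, eps ((z ^ m)⁻¹ • ω) * vv H₀ φ ((z ^ m)⁻¹) ω
          = -((m:ℤ) * lam H₀ φ z) := by
        rw [Finset.sum_congr rfl (fun ω _ => h3 ω), Finset.sum_neg_distrib,
          ← Finset.mul_sum, hsum_eps_z]
      have hval : hf ((z ^ m)⁻¹) = ((- (R * ((m:ℤ) * lam H₀ φ z)) : ℤ) : ℝ) := by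
        show ((R * ∑ ω : G ⧸ H₀, eps (((z ^ m)⁻¹ : G) • ω) * vv H₀ φ ((z ^ m)⁻¹) ω : ℤ) : ℝ)
          = ((- (R * ((m:ℤ) * lam H₀ φ z)) : ℤ) : ℝ)
        rw [h2]
        push_cast
        ring
      have hbusval : bus d x ((z ^ m)⁻¹)
          = ((ell S H₀ φ R (x⁻¹ * (z ^ m)⁻¹) - ell S H₀ φ R x⁻¹ : ℤ) : ℝ) := by
        rw [bus, hdval, hdval, mul_one]
        push_cast
        ring
      have heqn := congrFun hcontra ((z ^ m)⁻¹)
      rw [hval, hbusval] at heqn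
      have heqz : -(R * ((m:ℤ) * lam H₀ φ z))
          = ell S H₀ φ R (x⁻¹ * (z ^ m)⁻¹) - ell S H₀ φ R x⁻¹ := by
        exact_mod_cast heqn
      have hpos2 := ell_nonneg S H₀ φ R (x⁻¹ * (z ^ m)⁻¹)
      have hm1 : (1:ℤ) ≤ (m:ℤ) := by omega
      have t1 : (m:ℤ) * 1 ≤ (m:ℤ) * lam H₀ φ z :=
        mul_le_mul_of_nonneg_left hlamz1 (by omega)
      have t0 : (0:ℤ) ≤ (m:ℤ) * lam H₀ φ z := by nlinarith
      have t2 : 1 * ((m:ℤ) * lam H₀ φ z) ≤ R * ((m:ℤ) * lam H₀ φ z) :=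
        mul_le_mul_of_nonneg_right hR t0
      have : (m:ℤ) ≤ R * ((m:ℤ) * lam H₀ φ z) := by nlinarith
      omega
  have horb : (Set.range fun x : G => act x hf).Finite := by
    have hform : ∀ x : G, act x hf
        = fun y => ((R * ∑ ω : G ⧸ H₀, eps (x⁻¹ • (y • ω)) * vv H₀ φ y ω : ℤ) : ℝ) := by
      intro x
      funext y
      rw [act, hfdef]
      simp only
      have e2 : ∑ ω : G ⧸ H₀, eps ((x⁻¹ * y) • ω) * vv H₀ φ (x⁻¹ * y) ω
          = (∑ ω : G ⧸ H₀, eps (x⁻¹ • ω) * vv H₀ φ x⁻¹ ω)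
            + ∑ ω : G ⧸ H₀, eps (x⁻¹ • (y • ω)) * vv H₀ φ y ω := by
        have e3 : ∀ ω : G ⧸ H₀, eps ((x⁻¹ * y) • ω) * vv H₀ φ (x⁻¹ * y) ω
            = eps (x⁻¹ • (y • ω)) * vv H₀ φ x⁻¹ (y • ω)
              + eps (x⁻¹ • (y • ω)) * vv H₀ φ y ω := by
          intro ω
          rw [vv_mul H₀ φ hadd, mul_smul]
          ring
        rw [Finset.sum_congr rfl (fun ω _ => e3 ω), Finset.sum_add_distrib]
        congr 1
        exact sum_smul_reindex H₀ (fun ω => eps (x⁻¹ • ω) * vv H₀ φ x⁻¹ ω) y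
      have e4 : (R * ∑ ω : G ⧸ H₀, eps ((x⁻¹ * y) • ω) * vv H₀ φ (x⁻¹ * y) ω)
          - (R * ∑ ω : G ⧸ H₀, eps (x⁻¹ • ω) * vv H₀ φ x⁻¹ ω)
          = R * ∑ ω : G ⧸ H₀, eps (x⁻¹ • (y • ω)) * vv H₀ φ y ω := by
        rw [e2]; ring
      push_cast [← e4]
      ring
    refine Set.Finite.subset (Set.finite_range (fun e : (G ⧸ H₀) → (G ⧸ H₀) =>
      (fun y => ((R * ∑ ω : G ⧸ H₀, eps (e (y • ω)) * vv H₀ φ y ω : ℤ) : ℝ)))) ?_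
    rintro f ⟨x, rfl⟩
    exact ⟨fun ω => x⁻¹ • ω, (hform x).symm⟩
  exact ⟨d, ⟨hmetric, hint, hleftinv, hproper, hQI, hBanach⟩, hf, hInB, horb⟩

end VH
/-- A finitely generated infinite group `G` admits a virtual
homomorphism iff there is a Banach metric `d` on `G` and a metric functional
`h ∈ ∂(G,d)` with finite orbit under the `G`-action. -/
theorem exists_virtualHom_iff_exists_banachMetric_finiteOrbit
    {G : Type*} [Group G] [Group.FG G] [Infinite G] :
    (∃ φ : G → ℤ, IsVirtualHom φ) ↔
      ∃ d : G → G → ℝ, IsBanachMetric d ∧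
        ∃ h : G → ℝ, InBoundary d h ∧ (Set.range fun x : G => act x h).Finite := by
  constructor
  · rintro ⟨φ, H₀, hFI, hadd, a₀, ha₀, hne⟩
    haveI := hFI
    haveI : Finite (G ⧸ H₀) := Subgroup.finite_quotient_of_finiteIndex
    haveI : Fintype (G ⧸ H₀) := Fintype.ofFinite _
    obtain ⟨n, S₀, hcard, hgen₀⟩ := Group.fg_iff'.mp (inferInstance : Group.FG G)
    set S : Set G := (S₀ : Set G) ∪ ((S₀ : Set G))⁻¹ with hS
    have hfin : S.Finite := (S₀.finite_toSet).union (S₀.finite_toSet.inv)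
    have hsym : ∀ s ∈ S, s⁻¹ ∈ S := by
      intro s hs
      rcases hs with hs | hs
      · exact Or.inr (Set.inv_mem_inv.mpr hs)
      · exact Or.inl (Set.mem_inv.mp hs)
    have hgen : Subgroup.closure S = ⊤ := by
      rw [eq_top_iff, ← hgen₀]
      exact Subgroup.closure_mono Set.subset_union_left
    exact VH.forward_main S hfin hsym hgen H₀ φ hadd ha₀ hne
  · rintro ⟨d, hd, h, hb, hfin⟩
    exact backward d hd h hb hfin
end

section
/- Let G be a finitely generated infinite group that admits a surjective group homomorphism onto ℤ. Then there exists a Banach metric d on G and a metric functional h ∈ ∂(G,d) that is a fixed point of the G-action, i.e. x.h = h for all x ∈ G. -/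
open Filter Topology

section AuxBanach

variable {G : Type*} [Group G]

/-- The hybrid length function: max of |φ| and half the word length (rounded up). -/
private noncomputable def rhoF (φZ : G → ℤ) (U : Set G) (z : G) : ℕ :=
  max (φZ z).natAbs ((wordLength U z + 1) / 2)

/-- The candidate Banach metric. -/
private noncomputable def dF (φZ : G → ℤ) (U : Set G) : G → G → ℝ :=
  fun x y => (rhoF φZ U (x⁻¹ * y) : ℝ)

private lemma wlP_le {U : Set G} {z : G} {l : List G} (hl : ∀ s ∈ l, s ∈ U)
    (hp : l.prod = z) : wordLength U z ≤ l.length :=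
  Nat.sInf_le ⟨l, hl, rfl, hp⟩

private lemma exists_word {U : Set G} (hUsym : ∀ u ∈ U, u⁻¹ ∈ U)
    (hUtop : Subgroup.closure U = ⊤) (z : G) :
    ∃ l : List G, (∀ s ∈ l, s ∈ U) ∧ l.prod = z := by
  have hz : z ∈ Subgroup.closure U := by rw [hUtop]; trivial
  induction hz using Subgroup.closure_induction with
  | mem x hx => exact ⟨[x], by simp [hx], by simp⟩
  | one => exact ⟨[], by simp, by simp⟩
  | mul x y hx hy ihx ihy =>
      obtain ⟨l1, h1, p1⟩ := ihx
      obtain ⟨l2, h2, p2⟩ := ihy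
      refine ⟨l1 ++ l2, ?_, by simp [p1, p2]⟩
      intro s hs
      rcases List.mem_append.mp hs with h | h
      exacts [h1 s h, h2 s h]
  | inv x hx ihx =>
      obtain ⟨l, h1, p1⟩ := ihx
      refine ⟨(l.map (fun a => a⁻¹)).reverse, ?_, ?_⟩
      · intro s hs
        rw [List.mem_reverse, List.mem_map] at hs
        obtain ⟨a, ha, rfl⟩ := hs
        exact hUsym a (h1 a ha)
      · rw [← List.prod_inv_reverse, p1]

private lemma wl_spec {U : Set G} (hUsym : ∀ u ∈ U, u⁻¹ ∈ U)
    (hUtop : Subgroup.closure U = ⊤) (z : G) :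
    ∃ l : List G, (∀ s ∈ l, s ∈ U) ∧ l.length = wordLength U z ∧ l.prod = z := by
  obtain ⟨l, hl, hp⟩ := exists_word hUsym hUtop z
  have hne : {n : ℕ | ∃ l : List G, (∀ s ∈ l, s ∈ U) ∧ l.length = n ∧ l.prod = z}.Nonempty :=
    ⟨l.length, l, hl, rfl, hp⟩
  exact Nat.sInf_mem hne

private lemma wl_one {U : Set G} : wordLength U (1 : G) = 0 :=
  Nat.le_zero.mp (wlP_le (l := []) (by simp) (by simp))

private lemma wl_eq_zero {U : Set G} (hUsym : ∀ u ∈ U, u⁻¹ ∈ U)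
    (hUtop : Subgroup.closure U = ⊤) {z : G} (h : wordLength U z = 0) : z = 1 := by
  obtain ⟨l, _, hlen, hprod⟩ := wl_spec hUsym hUtop z
  rw [h, List.length_eq_zero_iff] at hlen
  rw [← hprod, hlen, List.prod_nil]

private lemma wl_mul {U : Set G} (hUsym : ∀ u ∈ U, u⁻¹ ∈ U)
    (hUtop : Subgroup.closure U = ⊤) (a b : G) :
    wordLength U (a * b) ≤ wordLength U a + wordLength U b := by
  obtain ⟨la, haU, halen, haprod⟩ := wl_spec hUsym hUtop a
  obtain ⟨lb, hbU, hblen, hbprod⟩ := wl_spec hUsym hUtop b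
  have := wlP_le (U := U) (z := a * b) (l := la ++ lb) ?_ (by simp [haprod, hbprod])
  · simpa [halen, hblen] using this
  · intro s hs
    rcases List.mem_append.mp hs with h | h
    exacts [haU s h, hbU s h]

private lemma wl_inv {U : Set G} (hUsym : ∀ u ∈ U, u⁻¹ ∈ U)
    (hUtop : Subgroup.closure U = ⊤) (z : G) :
    wordLength U z⁻¹ = wordLength U z := by
  have key : ∀ w : G, wordLength U w⁻¹ ≤ wordLength U w := by
    intro w
    obtain ⟨l, hU, hlen, hprod⟩ := wl_spec hUsym hUtop w
    have := wlP_le (U := U) (z := w⁻¹) (l := (l.map (fun a => a⁻¹)).reverse) ?_ ?_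
    · simpa [hlen] using this
    · intro s hs
      rw [List.mem_reverse, List.mem_map] at hs
      obtain ⟨a, ha, rfl⟩ := hs
      exact hUsym a (hU a ha)
    · rw [← List.prod_inv_reverse, hprod]
  have h2 := key z⁻¹
  rw [inv_inv] at h2
  exact le_antisymm (key z) h2

private lemma phi_list {φZ : G → ℤ} {U : Set G}
    (hmul : ∀ a b : G, φZ (a * b) = φZ a + φZ b)
    (hUphi : ∀ u ∈ U, (φZ u).natAbs ≤ 1) :
    ∀ l : List G, (∀ s ∈ l, s ∈ U) → (φZ l.prod).natAbs ≤ l.length := by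
  have hone : φZ 1 = 0 := by
    have h := hmul 1 1
    rw [one_mul] at h
    omega
  intro l
  induction l with
  | nil => intro _; simp [hone]
  | cons a l ih =>
      intro hmem
      have h1 : (φZ a).natAbs ≤ 1 := hUphi a (hmem a List.mem_cons_self)
      have h2 := ih (fun s hs => hmem s (List.mem_cons_of_mem a hs))
      rw [List.prod_cons, hmul]
      simp only [List.length_cons]
      omega

private lemma phi_le_wl {φZ : G → ℤ} {U : Set G}
    (hmul : ∀ a b : G, φZ (a * b) = φZ a + φZ b)
    (hUphi : ∀ u ∈ U, (φZ u).natAbs ≤ 1)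
    (hUsym : ∀ u ∈ U, u⁻¹ ∈ U) (hUtop : Subgroup.closure U = ⊤) (z : G) :
    (φZ z).natAbs ≤ wordLength U z := by
  obtain ⟨l, hU, hlen, hprod⟩ := wl_spec hUsym hUtop z
  have h := phi_list hmul hUphi l hU
  rw [hprod, hlen] at h
  exact h

private lemma ball_fin {U : Set G} (hUfin : U.Finite) (hUsym : ∀ u ∈ U, u⁻¹ ∈ U)
    (hUtop : Subgroup.closure U = ⊤) :
    ∀ m : ℕ, {z : G | wordLength U z ≤ m}.Finite := by
  intro m
  induction m with
  | zero =>
      refine Set.Finite.subset (Set.finite_singleton 1) ?_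
      intro z hz
      exact wl_eq_zero hUsym hUtop (Nat.le_zero.mp hz)
  | succ m ih =>
      refine Set.Finite.subset (ih.union (Set.Finite.biUnion hUfin
        (fun u _ => ih.image (fun w => u * w)))) ?_
      intro z hz
      obtain ⟨l, hU, hlen, hprod⟩ := wl_spec hUsym hUtop z
      match l, hlen, hprod with
      | [], hlen, hprod =>
          left
          simp only [Set.mem_setOf_eq]
          simp only [List.length_nil] at hlen
          rw [← hlen]
          omega
      | a :: l', hlen, hprod =>
          right
          refine Set.mem_biUnion (hU a List.mem_cons_self) ?_
          refine ⟨l'.prod, ?_, by rw [← hprod, List.prod_cons]⟩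
          have hle : wordLength U l'.prod ≤ l'.length :=
            wlP_le (fun s hs => hU s (List.mem_cons_of_mem a hs)) rfl
          simp only [List.length_cons] at hlen
          simp only [Set.mem_setOf_eq] at hz ⊢
          omega

private lemma rho_inv {φZ : G → ℤ} {U : Set G}
    (hinv : ∀ z : G, φZ z⁻¹ = -φZ z)
    (hUsym : ∀ u ∈ U, u⁻¹ ∈ U) (hUtop : Subgroup.closure U = ⊤) (z : G) :
    rhoF φZ U z⁻¹ = rhoF φZ U z := by
  unfold rhoF
  rw [hinv, Int.natAbs_neg, wl_inv hUsym hUtop]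

private lemma rho_mul {φZ : G → ℤ} {U : Set G}
    (hmul : ∀ a b : G, φZ (a * b) = φZ a + φZ b)
    (hUsym : ∀ u ∈ U, u⁻¹ ∈ U) (hUtop : Subgroup.closure U = ⊤) (a b : G) :
    rhoF φZ U (a * b) ≤ rhoF φZ U a + rhoF φZ U b := by
  have h1 : (φZ (a * b)).natAbs ≤ (φZ a).natAbs + (φZ b).natAbs := by
    rw [hmul]; exact Int.natAbs_add_le _ _
  have h2 := wl_mul hUsym hUtop a b
  unfold rhoF
  omega

private lemma rho_one {φZ : G → ℤ} {U : Set G}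
    (hone : φZ 1 = 0) : rhoF φZ U (1 : G) = 0 := by
  unfold rhoF
  rw [hone, wl_one]
  omega

private lemma rho_eq_zero {φZ : G → ℤ} {U : Set G}
    (hUsym : ∀ u ∈ U, u⁻¹ ∈ U) (hUtop : Subgroup.closure U = ⊤) {z : G}
    (h : rhoF φZ U z = 0) : z = 1 := by
  unfold rhoF at h
  have : wordLength U z = 0 := by omega
  exact wl_eq_zero hUsym hUtop this

private lemma rho_le_wl {φZ : G → ℤ} {U : Set G}
    (hmul : ∀ a b : G, φZ (a * b) = φZ a + φZ b)
    (hUphi : ∀ u ∈ U, (φZ u).natAbs ≤ 1)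
    (hUsym : ∀ u ∈ U, u⁻¹ ∈ U) (hUtop : Subgroup.closure U = ⊤) (z : G) :
    rhoF φZ U z ≤ wordLength U z := by
  have := phi_le_wl hmul hUphi hUsym hUtop z
  unfold rhoF
  omega

private lemma wl_le_two_rho {φZ : G → ℤ} {U : Set G} (z : G) :
    wordLength U z ≤ 2 * rhoF φZ U z := by
  unfold rhoF
  omega

private lemma lim_le_of_freq {f : ℕ → ℝ} {a c : ℝ} (hf : Tendsto f atTop (𝓝 a))
    {S : Set ℕ} (hS : S.Infinite) (hfc : ∀ n ∈ S, f n ≤ c) : a ≤ c := by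
  by_contra hlt
  push_neg at hlt
  obtain ⟨N, hN⟩ := eventually_atTop.mp (hf.eventually_const_lt hlt)
  obtain ⟨n, hnS, hn⟩ := hS.exists_gt N
  exact absurd (hfc n hnS) (not_le.mpr (hN n hn.le))

private lemma le_lim_of_freq {f : ℕ → ℝ} {a c : ℝ} (hf : Tendsto f atTop (𝓝 a))
    {S : Set ℕ} (hS : S.Infinite) (hfc : ∀ n ∈ S, c ≤ f n) : c ≤ a := by
  by_contra hlt
  push_neg at hlt
  obtain ⟨N, hN⟩ := eventually_atTop.mp (hf.eventually_lt_const hlt)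
  obtain ⟨n, hnS, hn⟩ := hS.exists_gt N
  exact absurd (hfc n hnS) (not_le.mpr (hN n hn.le))



/-- Every pointwise limit of Busemann functions of `dF` is unbounded. -/
private theorem clause5 {φZ : G → ℤ} {U : Set G}
    (hmul : ∀ a b : G, φZ (a * b) = φZ a + φZ b)
    (hinv : ∀ z : G, φZ z⁻¹ = -φZ z)
    (hUfin : U.Finite) (hUsym : ∀ u ∈ U, u⁻¹ ∈ U)
    (hUtop : Subgroup.closure U = ⊤)
    (hUphi : ∀ u ∈ U, (φZ u).natAbs ≤ 1)
    {g : G} (hgnpow : ∀ n : ℕ, φZ (g ^ n) = (n : ℤ))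
    (h0 : G → ℝ) (u : ℕ → G)
    (hu : ∀ y : G, Tendsto (fun n => bus (dF φZ U) (u n) y) atTop (𝓝 (h0 y)))
    (B : ℝ) (hB : ∀ x : G, |h0 x| ≤ B) : False := by
  classical
  have hBnn : (0 : ℝ) ≤ B := le_trans (abs_nonneg _) (hB 1)
  have hbusEq : ∀ (n : ℕ) (y : G), bus (dF φZ U) (u n) y =
      ((rhoF φZ U ((u n)⁻¹ * y) : ℕ) : ℝ) - ((rhoF φZ U ((u n)⁻¹) : ℕ) : ℝ) := by
    intro n y
    simp only [bus, dF, mul_one]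
  set m : ℕ := ⌊B⌋₊ + 1 with hm
  have hBm : B < (m : ℝ) := by
    have := Nat.lt_floor_add_one B
    rw [hm]
    push_cast
    linarith
  by_cases hA : ∀ D : ℕ,
      {n : ℕ | (φZ ((u n)⁻¹)).natAbs + D ≤ (wordLength U ((u n)⁻¹) + 1) / 2}.Infinite
  · -- Case A : word part dominates along a subsequence; use geodesic suffixes.
    set t : ℕ := 2 * m with ht
    have hSD := hA (2 * t)
    set SD := {n : ℕ | (φZ ((u n)⁻¹)).natAbs + 2 * t ≤ (wordLength U ((u n)⁻¹) + 1) / 2} with hSDdef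
    have hex : ∀ n : ℕ, ∃ p : G, wordLength U p ≤ t ∧
        (n ∈ SD → bus (dF φZ U) (u n) p ≤ -(m : ℝ)) := by
      intro n
      by_cases hn : n ∈ SD
      · obtain ⟨l, hlU, hllen, hlprod⟩ := wl_spec hUsym hUtop ((u n)⁻¹)
        have hcase : (φZ ((u n)⁻¹)).natAbs + 2 * t ≤ (wordLength U ((u n)⁻¹) + 1) / 2 := hn
        have hWt : t ≤ wordLength U ((u n)⁻¹) := by omega
        set W := wordLength U ((u n)⁻¹) with hW
        set l₁ := l.take (W - t) with hl₁
        set l₂ := l.drop (W - t) with hl₂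
        have hlen1 : l₁.length = W - t := by
          rw [hl₁, List.length_take, hllen]; omega
        have hlen2 : l₂.length = t := by
          rw [hl₂, List.length_drop, hllen]; omega
        have hmem1 : ∀ s ∈ l₁, s ∈ U := fun s hs => hlU s (List.take_subset _ _ hs)
        have hmem2 : ∀ s ∈ l₂, s ∈ U := fun s hs => hlU s (List.drop_subset _ _ hs)
        have hsplit : l₁.prod * l₂.prod = (u n)⁻¹ := by
          rw [← List.prod_append, hl₁, hl₂, List.take_append_drop, hlprod]
        refine ⟨(l₂.prod)⁻¹, ?_, fun _ => ?_⟩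
        · rw [wl_inv hUsym hUtop]
          exact le_trans (wlP_le hmem2 rfl) (le_of_eq hlen2)
        · have hvp : (u n)⁻¹ * (l₂.prod)⁻¹ = l₁.prod := by
            rw [← hsplit]; group
          have hw1 : wordLength U ((u n)⁻¹ * (l₂.prod)⁻¹) ≤ W - t := by
            rw [hvp]
            exact le_trans (wlP_le hmem1 rfl) (le_of_eq hlen1)
          have hphi2 : (φZ (l₂.prod)).natAbs ≤ t :=
            le_trans (phi_list hmul hUphi l₂ hmem2) (le_of_eq hlen2)
          have hphisplit : φZ ((u n)⁻¹) = φZ (l₁.prod) + φZ (l₂.prod) := by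
            rw [← hsplit, hmul]
          have ha1 : (φZ ((u n)⁻¹ * (l₂.prod)⁻¹)).natAbs ≤ (φZ ((u n)⁻¹)).natAbs + t := by
            rw [hvp]
            omega
          have hρ1 : rhoF φZ U ((u n)⁻¹ * (l₂.prod)⁻¹) + m ≤ rhoF φZ U ((u n)⁻¹) := by
            unfold rhoF
            rw [← hW]
            omega
          rw [hbusEq]
          have hc : ((rhoF φZ U ((u n)⁻¹ * (l₂.prod)⁻¹) : ℕ) : ℝ) + (m : ℝ) ≤
              ((rhoF φZ U ((u n)⁻¹) : ℕ) : ℝ) := by exact_mod_cast hρ1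
          linarith
      · exact ⟨1, by rw [wl_one]; exact Nat.zero_le _, fun h => absurd h hn⟩
    choose p hp1 hp2 using hex
    have hfin : {z : G | wordLength U z ≤ t}.Finite := ball_fin hUfin hUsym hUtop t
    have hpig : ∃ q ∈ {z : G | wordLength U z ≤ t}, {n | n ∈ SD ∧ p n = q}.Infinite := by
      by_contra hcon
      push_neg at hcon
      have hsub : SD ⊆ ⋃ q ∈ {z : G | wordLength U z ≤ t}, {n | n ∈ SD ∧ p n = q} := by
        intro n hn
        exact Set.mem_biUnion (hp1 n) ⟨hn, rfl⟩
      exact hSD (Set.Finite.subset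
        (Set.Finite.biUnion hfin (fun q hq => hcon q hq)) hsub)
    obtain ⟨q, _, hqinf⟩ := hpig
    have hle : h0 q ≤ -(m : ℝ) :=
      lim_le_of_freq (hu q) hqinf (fun n hn => by rw [← hn.2]; exact hp2 n hn.1)
    have h1 : -B ≤ h0 q := neg_le_of_abs_le (hB q)
    linarith
  · -- Case B : |φ| comparable to ρ eventually; use powers of g.
    push_neg at hA
    obtain ⟨D, hD⟩ := hA
    obtain ⟨N₀, hN₀⟩ : ∃ N₀ : ℕ, ∀ n ∈
        {n : ℕ | (φZ ((u n)⁻¹)).natAbs + D ≤ (wordLength U ((u n)⁻¹) + 1) / 2}, n ≤ N₀ := by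
      rcases hD.bddAbove with ⟨N₀, hN₀⟩
      exact ⟨N₀, fun n hn => hN₀ hn⟩
    have hrb : ∀ n : ℕ, N₀ < n → rhoF φZ U ((u n)⁻¹) ≤ (φZ ((u n)⁻¹)).natAbs + D := by
      intro n hn
      have hnot : ¬((φZ ((u n)⁻¹)).natAbs + D ≤ (wordLength U ((u n)⁻¹) + 1) / 2) := by
        intro hc
        exact absurd (hN₀ n hc) (by omega)
      unfold rhoF
      omega
    set k : ℕ := ⌊B⌋₊ + D + 1 with hk
    have hkD : B < (k : ℝ) - (D : ℝ) := by
      have := Nat.lt_floor_add_one B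
      rw [hk]
      push_cast
      linarith
    have hsplitsign : {n : ℕ | N₀ < n ∧ 0 ≤ φZ ((u n)⁻¹)}.Infinite ∨
        {n : ℕ | N₀ < n ∧ φZ ((u n)⁻¹) ≤ 0}.Infinite := by
      by_contra hc
      push_neg at hc
      obtain ⟨hc1, hc2⟩ := hc
      have hsub : Set.Ioi N₀ ⊆ {n : ℕ | N₀ < n ∧ 0 ≤ φZ ((u n)⁻¹)} ∪
          {n : ℕ | N₀ < n ∧ φZ ((u n)⁻¹) ≤ 0} := by
        intro n hn
        rcases le_total 0 (φZ ((u n)⁻¹)) with h | h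
        · exact Or.inl ⟨hn, h⟩
        · exact Or.inr ⟨hn, h⟩
      exact (Set.Ioi_infinite N₀) (Set.Finite.subset (hc1.union hc2) hsub)
    rcases hsplitsign with hpos | hneg
    · have hlow : ∀ n : ℕ, N₀ < n → 0 ≤ φZ ((u n)⁻¹) →
          ((k : ℝ) - (D : ℝ)) ≤ bus (dF φZ U) (u n) (g ^ k) := by
        intro n hn hsgn
        have h1 : (φZ ((u n)⁻¹ * g ^ k)).natAbs = (φZ ((u n)⁻¹)).natAbs + k := by
          rw [hmul, hgnpow]
          omega
        have h2 : (φZ ((u n)⁻¹)).natAbs + k ≤ rhoF φZ U ((u n)⁻¹ * g ^ k) := by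
          unfold rhoF
          omega
        have h3 := hrb n hn
        rw [hbusEq]
        have hc1 : ((φZ ((u n)⁻¹)).natAbs : ℝ) + (k : ℝ) ≤
            ((rhoF φZ U ((u n)⁻¹ * g ^ k) : ℕ) : ℝ) := by exact_mod_cast h2
        have hc2 : ((rhoF φZ U ((u n)⁻¹) : ℕ) : ℝ) ≤
            ((φZ ((u n)⁻¹)).natAbs : ℝ) + (D : ℝ) := by exact_mod_cast h3
        linarith
      have hge : (k : ℝ) - (D : ℝ) ≤ h0 (g ^ k) :=
        le_lim_of_freq (hu (g ^ k)) hpos (fun n hn => hlow n hn.1 hn.2)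
      have h1 : h0 (g ^ k) ≤ B := le_trans (le_abs_self _) (hB _)
      linarith
    · have hlow : ∀ n : ℕ, N₀ < n → φZ ((u n)⁻¹) ≤ 0 →
          ((k : ℝ) - (D : ℝ)) ≤ bus (dF φZ U) (u n) ((g ^ k)⁻¹) := by
        intro n hn hsgn
        have h1 : (φZ ((u n)⁻¹ * (g ^ k)⁻¹)).natAbs = (φZ ((u n)⁻¹)).natAbs + k := by
          rw [hmul, hinv (g ^ k), hgnpow]
          omega
        have h2 : (φZ ((u n)⁻¹)).natAbs + k ≤ rhoF φZ U ((u n)⁻¹ * (g ^ k)⁻¹) := by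
          unfold rhoF
          omega
        have h3 := hrb n hn
        rw [hbusEq]
        have hc1 : ((φZ ((u n)⁻¹)).natAbs : ℝ) + (k : ℝ) ≤
            ((rhoF φZ U ((u n)⁻¹ * (g ^ k)⁻¹) : ℕ) : ℝ) := by exact_mod_cast h2
        have hc2 : ((rhoF φZ U ((u n)⁻¹) : ℕ) : ℝ) ≤
            ((φZ ((u n)⁻¹)).natAbs : ℝ) + (D : ℝ) := by exact_mod_cast h3
        linarith
      have hge : (k : ℝ) - (D : ℝ) ≤ h0 ((g ^ k)⁻¹) :=
        le_lim_of_freq (hu ((g ^ k)⁻¹)) hneg (fun n hn => hlow n hn.1 hn.2)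
      have h1 : h0 ((g ^ k)⁻¹) ≤ B := le_trans (le_abs_self _) (hB _)
      linarith

end AuxBanach

/-- If a finitely generated infinite group `G` admits a surjective
homomorphism onto `ℤ`, then there is a Banach metric `d` on `G` and a metric
functional `h ∈ ∂(G,d)` which is a fixed point of the `G`-action. -/
theorem exists_banachMetric_fixedPoint_of_surjective_to_int
    {G : Type*} [Group G] [Group.FG G] [Infinite G]
    (hsurj : ∃ π : G →* Multiplicative ℤ, Function.Surjective π) :
    ∃ d : G → G → ℝ, IsBanachMetric d ∧
      ∃ h : G → ℝ, InBoundary d h ∧ ∀ x : G, act x h = h := by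
  classical
  obtain ⟨π, hπ⟩ := hsurj
  set φZ : G → ℤ := fun x => Multiplicative.toAdd (π x) with hφZdef
  have hmul : ∀ a b : G, φZ (a * b) = φZ a + φZ b := by
    intro a b
    simp [hφZdef]
  have hone : φZ 1 = 0 := by simp [hφZdef]
  have hinv : ∀ z : G, φZ z⁻¹ = -φZ z := by
    intro z
    simp [hφZdef]
  obtain ⟨g, hg⟩ : ∃ g : G, φZ g = 1 := by
    obtain ⟨g, hgg⟩ := hπ (Multiplicative.ofAdd 1)
    exact ⟨g, by simp [hφZdef, hgg]⟩
  have hzpow : ∀ m : ℤ, φZ (g ^ m) = m := by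
    intro m
    have : π (g ^ m) = (π g) ^ m := map_zpow π g m
    simp only [hφZdef, this, toAdd_zpow]
    have : Multiplicative.toAdd (π g) = 1 := hg
    rw [this]
    simp
  have hgnpow : ∀ n : ℕ, φZ (g ^ n) = (n : ℤ) := by
    intro n
    have := hzpow (n : ℤ)
    rwa [zpow_natCast] at this
  -- the generating set
  obtain ⟨T, hTtop, hTfin⟩ := (Subgroup.fg_iff (⊤ : Subgroup G)).mp Group.FG.out
  set U : Set G := {1, g, g⁻¹} ∪ ((fun t => t * g ^ (-(φZ t))) '' T ∪
      (fun t => (t * g ^ (-(φZ t)))⁻¹) '' T) with hUdef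
  have hUfin : U.Finite := by
    apply Set.Finite.union
    · exact (Set.finite_singleton g⁻¹).insert g |>.insert 1
    · exact (hTfin.image _).union (hTfin.image _)
  have hgU : g ∈ U := by simp [hUdef]
  have h1U : (1 : G) ∈ U := by simp [hUdef]
  have hgU' : g⁻¹ ∈ U := by simp [hUdef]
  have hUsym : ∀ u ∈ U, u⁻¹ ∈ U := by
    intro u hu
    simp only [hUdef, Set.mem_union, Set.mem_insert_iff, Set.mem_singleton_iff,
      Set.mem_image] at hu ⊢
    rcases hu with (rfl | rfl | rfl) | (⟨a, ha, rfl⟩ | ⟨a, ha, rfl⟩)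
    · left; left; exact inv_one
    · left; right; right; rfl
    · left; right; left; exact inv_inv g
    · right; right; exact ⟨a, ha, rfl⟩
    · right; left; exact ⟨a, ha, (inv_inv _).symm⟩
  have hUphi : ∀ u ∈ U, (φZ u).natAbs ≤ 1 := by
    have hker : ∀ a : G, φZ (a * g ^ (-(φZ a))) = 0 := by
      intro a
      rw [hmul, hzpow]
      omega
    intro u hu
    simp only [hUdef, Set.mem_union, Set.mem_insert_iff, Set.mem_singleton_iff,
      Set.mem_image] at hu
    rcases hu with (rfl | rfl | rfl) | (⟨a, _, rfl⟩ | ⟨a, _, rfl⟩)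
    · rw [hone]; omega
    · rw [hg]; omega
    · rw [hinv, hg]; omega
    · rw [hker]; omega
    · rw [hinv, hker]; omega
  have hUtop : Subgroup.closure U = ⊤ := by
    rw [eq_top_iff, ← hTtop]
    rw [Subgroup.closure_le]
    intro t ht
    have h1 : t * g ^ (-(φZ t)) ∈ Subgroup.closure U :=
      Subgroup.subset_closure (by
        simp only [hUdef, Set.mem_union, Set.mem_image]
        exact Or.inr (Or.inl ⟨t, ht, rfl⟩))
    have h2 : g ∈ Subgroup.closure U := Subgroup.subset_closure hgU
    have h3 : t = (t * g ^ (-(φZ t))) * g ^ (φZ t) := by group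
    rw [SetLike.mem_coe, h3]
    exact mul_mem h1 (Subgroup.zpow_mem _ h2 _)
  -- word length of powers of g
  have hwl_gpow : ∀ n : ℕ, wordLength U (g ^ n) = n := by
    intro n
    refine le_antisymm ?_ ?_
    · have h := wlP_le (U := U) (z := g ^ n) (l := List.replicate n g)
        (fun s hs => by rw [List.eq_of_mem_replicate hs]; exact hgU)
        (List.prod_replicate n g)
      simpa using h
    · have h := phi_le_wl hmul hUphi hUsym hUtop (g ^ n)
      rw [hgnpow] at h
      simpa using h
  have hwl_gpow_inv : ∀ n : ℕ, wordLength U ((g ^ n)⁻¹) = n := by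
    intro n
    rw [wl_inv hUsym hUtop, hwl_gpow]
  have hrho_gpow_inv : ∀ n : ℕ, 1 ≤ n → rhoF φZ U ((g ^ n)⁻¹) = n := by
    intro n hn
    unfold rhoF
    rw [hinv, hgnpow, hwl_gpow_inv]
    omega
  -- key computation along the ray
  have hkey : ∀ (y : G) (n : ℕ), 2 * (φZ y).natAbs + wordLength U y + 1 ≤ n →
      ((rhoF φZ U ((g ^ n)⁻¹ * y) : ℕ) : ℤ) = (n : ℤ) - φZ y := by
    intro y n hn
    have hφ : φZ ((g ^ n)⁻¹ * y) = -(n : ℤ) + φZ y := by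
      rw [hmul, hinv (g ^ n), hgnpow]
    have hw : wordLength U ((g ^ n)⁻¹ * y) ≤ n + wordLength U y := by
      have h := wl_mul hUsym hUtop ((g ^ n)⁻¹) y
      rwa [hwl_gpow_inv] at h
    have hmax : rhoF φZ U ((g ^ n)⁻¹ * y) = (-(n : ℤ) + φZ y).natAbs := by
      unfold rhoF
      rw [hφ]
      omega
    rw [hmax]
    omega
  refine ⟨dF φZ U, ⟨⟨?_, ?_, ?_, ?_⟩, ?_, ?_, ?_, ?_, ?_⟩,
    fun y => -((φZ y : ℤ) : ℝ), ⟨⟨fun n => g ^ n, ?_⟩, ?_⟩, ?_⟩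
  · -- nonneg
    intro x y
    exact Nat.cast_nonneg _
  · -- eq zero iff
    intro x y
    simp only [dF, Nat.cast_eq_zero]
    constructor
    · intro h
      exact inv_mul_eq_one.mp (rho_eq_zero hUsym hUtop h)
    · intro h
      subst h
      simp only [inv_mul_cancel]
      exact rho_one hone
  · -- symmetric
    intro x y
    simp only [dF]
    have h : rhoF φZ U (y⁻¹ * x) = rhoF φZ U (x⁻¹ * y) := by
      rw [show y⁻¹ * x = (x⁻¹ * y)⁻¹ by group]
      exact rho_inv hinv hUsym hUtop _
    rw [h]
  · -- triangle
    intro x y z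
    simp only [dF]
    have h := rho_mul hmul hUsym hUtop (x⁻¹ * y) (y⁻¹ * z)
    rw [show (x⁻¹ * y) * (y⁻¹ * z) = x⁻¹ * z by group] at h
    exact_mod_cast h
  · -- integer valued
    intro x y
    exact ⟨rhoF φZ U (x⁻¹ * y), rfl⟩
  · -- left invariant
    intro x y z
    simp only [dF]
    rw [show (z * x)⁻¹ * (z * y) = x⁻¹ * y by group]
  · -- proper
    intro r
    refine Set.Finite.subset
      (Set.Finite.image (fun z => z⁻¹) (ball_fin hUfin hUsym hUtop ⌊2 * r⌋₊)) ?_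
    intro x hx
    simp only [Set.mem_setOf_eq, dF, mul_one] at hx
    refine ⟨x⁻¹, ?_, inv_inv x⟩
    simp only [Set.mem_setOf_eq]
    have h1 : wordLength U x⁻¹ ≤ 2 * rhoF φZ U x⁻¹ := wl_le_two_rho _
    have h1' : ((wordLength U x⁻¹ : ℕ) : ℝ) ≤ 2 * ((rhoF φZ U x⁻¹ : ℕ) : ℝ) := by
      exact_mod_cast h1
    exact Nat.le_floor (by linarith)
  · -- QI to Cayley
    refine ⟨U, ⟨hUfin, hUsym, hUtop⟩, id, 3, by norm_num, fun y => ⟨y, ?_⟩,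
      fun x y => ⟨?_, ?_⟩⟩
    · simp only [wordDist, id_eq, inv_mul_cancel, wl_one, Nat.cast_zero]
      norm_num
    · simp only [wordDist, dF, id_eq]
      have h1 : rhoF φZ U (x⁻¹ * y) ≤ wordLength U (x⁻¹ * y) :=
        rho_le_wl hmul hUphi hUsym hUtop _
      have h1' : ((rhoF φZ U (x⁻¹ * y) : ℕ) : ℝ) ≤ ((wordLength U (x⁻¹ * y) : ℕ) : ℝ) := by
        exact_mod_cast h1
      have h0 : (0 : ℝ) ≤ ((rhoF φZ U (x⁻¹ * y) : ℕ) : ℝ) := Nat.cast_nonneg _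
      have h3 : (3 : ℝ)⁻¹ * ((rhoF φZ U (x⁻¹ * y) : ℕ) : ℝ) ≤
          ((rhoF φZ U (x⁻¹ * y) : ℕ) : ℝ) := by linarith
      linarith
    · simp only [wordDist, dF, id_eq]
      have h1 : wordLength U (x⁻¹ * y) ≤ 2 * rhoF φZ U (x⁻¹ * y) := wl_le_two_rho _
      have h1' : ((wordLength U (x⁻¹ * y) : ℕ) : ℝ) ≤
          2 * ((rhoF φZ U (x⁻¹ * y) : ℕ) : ℝ) := by exact_mod_cast h1
      have h0 : (0 : ℝ) ≤ ((rhoF φZ U (x⁻¹ * y) : ℕ) : ℝ) := Nat.cast_nonneg _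
      linarith
  · -- all boundary functionals unbounded
    intro h0 hIB hbb
    obtain ⟨B, hB⟩ := hbb
    obtain ⟨⟨u, hu⟩, -⟩ := hIB
    exact clause5 hmul hinv hUfin hUsym hUtop hUphi hgnpow h0 u hu B hB
  · -- Busemann functions along gⁿ converge to -φ
    intro y
    refine Filter.Tendsto.congr' ?_ tendsto_const_nhds
    refine eventually_atTop.mpr ⟨2 * (φZ y).natAbs + wordLength U y + 1, fun n hn => ?_⟩
    have hN1 : 1 ≤ n := by omega
    have hb : bus (dF φZ U) (g ^ n) y =
        ((rhoF φZ U ((g ^ n)⁻¹ * y) : ℕ) : ℝ) - ((rhoF φZ U ((g ^ n)⁻¹) : ℕ) : ℝ) := by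
      simp only [bus, dF, mul_one]
    have h2 := hkey y n hn
    have h3 : ((rhoF φZ U ((g ^ n)⁻¹ * y) : ℕ) : ℝ) = (((n : ℤ) - φZ y : ℤ) : ℝ) := by
      exact_mod_cast congrArg (fun z : ℤ => (z : ℝ)) h2
    show -(((φZ y : ℤ)) : ℝ) = bus (dF φZ U) (g ^ n) y
    rw [hb, hrho_gpow_inv n hN1, h3]
    push_cast
    ring
  · -- not a Busemann function
    intro x heq
    have h1 := congrFun heq (g ^ (rhoF φZ U x⁻¹ + 1))
    simp only [bus, dF, mul_one, hgnpow] at h1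
    have h3 : (0 : ℝ) ≤ ((rhoF φZ U (x⁻¹ * g ^ (rhoF φZ U x⁻¹ + 1)) : ℕ) : ℝ) :=
      Nat.cast_nonneg _
    push_cast at h1
    linarith
  · -- fixed point of the action
    intro x
    funext y
    simp only [act]
    rw [hmul x⁻¹ y]
    push_cast
    ring
end
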